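/- arXiv:0907.2577 — 7 statements merged into one kernel-verified Lean document; each statement's English description precedes it below -/
import Mathlib

section
/- For any prime p, any non-negative integers a and j with 0 ≤ a < p, any positive integers N_1, N_2, …, N_k, and any integer L with 1 ≤ L ≤ max(N_1,…,N_k), the p-adic valuation of the rational number 𝐁_𝐍(a+pj)·(H_{Lj+⌊La/p⌋} − H_{Lj}) is at least 1, i.e., 𝐁_𝐍(a+pj)·(H_{Lj+⌊La/p⌋} − H_{Lj}) ∈ pℤ_p. -/
open Finset

/-- The `n`-th harmonic number `H_n = 1 + 1/2 + ⋯ + 1/n`, as a rational (`H_0 = 0`). -/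
def harm (n : ℕ) : ℚ := ∑ i ∈ Finset.range n, (1 : ℚ) / (i + 1)

/-- Subsets of the set of distinct prime factors of `N` having even cardinality. -/
def evenSub (N : ℕ) : Finset (Finset ℕ) :=
  N.primeFactors.powerset.filter fun J => Even J.card

/-- Subsets of the set of distinct prime factors of `N` having odd cardinality. -/
def oddSub (N : ℕ) : Finset (Finset ℕ) :=
  N.primeFactors.powerset.filter fun J => Odd J.card

/-- `∏_{j=1}^μ (α_j m)!`, where the `α_j` are the quotients of `N` by products of evenly
many distinct prime factors of `N`. -/
def Bnum (N m : ℕ) : ℕ :=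
  ∏ J ∈ evenSub N, Nat.factorial ((N / ∏ p ∈ J, p) * m)

/-- `∏_{j=1}^η (β_j m)!`, where the `β_j` are the quotients of `N` by products of oddly
many distinct prime factors of `N`, padded with `φ(N)` entries equal to `1` (so that
`Σ α_j = Σ β_j`). -/
def Bden (N m : ℕ) : ℕ :=
  (∏ J ∈ oddSub N, Nat.factorial ((N / ∏ p ∈ J, p) * m)) * (Nat.factorial m) ^ N.totient

/-- `𝐁_N(m) = (∏ (α_j m)!)/(∏ (β_j m)!)`. -/
noncomputable def BB (N m : ℕ) : ℚ := (Bnum N m : ℚ) / (Bden N m : ℚ)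

/-- `𝐁_𝐍(m) = ∏_{j=1}^k 𝐁_{N_j}(m)` for a vector `𝐍 = (N_1, …, N_k)`. -/
noncomputable def BBvec {k : ℕ} (N : Fin k → ℕ) (m : ℕ) : ℚ := ∏ i, BB (N i) m

/-- Count of integers in `[1, t]` coprime to `N`. -/
def Cop (t N : ℕ) : ℕ := #((Finset.Ioc 0 t).filter fun k => Nat.Coprime k N)

lemma cop_ie (N : ℕ) (hN : N ≠ 0) (t : ℕ) :
    ∑ J ∈ N.primeFactors.powerset, (-1 : ℤ) ^ J.card * ((t / ∏ p ∈ J, p : ℕ) : ℤ)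
      = (Cop t N : ℤ) := by
  have key : ∀ J ∈ N.primeFactors.powerset,
      (-1 : ℤ) ^ J.card * ((t / ∏ p ∈ J, p : ℕ) : ℤ)
        = ∑ k ∈ Finset.Ioc 0 t, (if (∏ p ∈ J, p) ∣ k then (-1 : ℤ) ^ J.card else 0) := by
    intro J _
    rw [← Nat.Ioc_filter_dvd_card_eq_div, ← Finset.sum_filter]
    simp [Finset.sum_const, mul_comm]
  rw [Finset.sum_congr rfl key, Finset.sum_comm]
  have hpt : ∀ k ∈ Finset.Ioc 0 t,
      (∑ J ∈ N.primeFactors.powerset, if (∏ p ∈ J, p) ∣ k then (-1 : ℤ) ^ J.card else 0)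
        = (if Nat.Coprime k N then (1 : ℤ) else 0) := by
    intro k hk
    have hk0 : 0 < k := (Finset.mem_Ioc.mp hk).1
    rw [← Finset.sum_filter]
    have hset : N.primeFactors.powerset.filter (fun J => (∏ p ∈ J, p) ∣ k)
        = (N.primeFactors.filter (fun p => p ∣ k)).powerset := by
      ext J
      simp only [Finset.mem_filter, Finset.mem_powerset]
      constructor
      · rintro ⟨hJ, hdvd⟩
        intro p hp
        exact Finset.mem_filter.mpr ⟨hJ hp, dvd_trans (Finset.dvd_prod_of_mem _ hp) hdvd⟩
      · intro h
        refine ⟨fun p hp => (Finset.mem_filter.mp (h hp)).1, ?_⟩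
        exact Finset.prod_primes_dvd k
          (fun p hp => (Nat.prime_of_mem_primeFactors (Finset.mem_filter.mp (h hp)).1).prime)
          (fun p hp => (Finset.mem_filter.mp (h hp)).2)
    rw [hset, Finset.sum_powerset_neg_one_pow_card]
    congr 1
    simp only [Finset.filter_eq_empty_iff, eq_iff_iff]
    constructor
    · intro h
      by_contra hcop
      obtain ⟨q, hq, hqk, hqN⟩ := Nat.Prime.not_coprime_iff_dvd.mp hcop
      exact h (Nat.mem_primeFactors.mpr ⟨hq, hqN, hN⟩) hqk
    · intro hcop q hq hqk
      have hqN : q ∣ N := Nat.dvd_of_mem_primeFactors hq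
      have : q ∣ 1 := hcop ▸ Nat.dvd_gcd hqk hqN
      exact (Nat.prime_of_mem_primeFactors hq).one_lt.ne' (Nat.eq_one_of_dvd_one this)
  rw [Finset.sum_congr rfl hpt]
  rw [Finset.sum_boole]
  rfl

lemma cop_period (N t : ℕ) : Cop (t + N) N = Cop t N + N.totient := by
  unfold Cop
  rw [← Finset.Ioc_union_Ioc_eq_Ioc (Nat.zero_le t) (Nat.le_add_right t N),
    Finset.filter_union, Finset.card_union_of_disjoint
      (Finset.disjoint_filter_filter (by
        rw [Finset.disjoint_left]
        intro x hx hx'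
        simp only [Finset.mem_Ioc] at hx hx'
        omega))]
  congr 1
  have h1 : Finset.Ioc t (t + N) = Finset.Ico (t + 1) ((t + 1) + N) := by
    rw [← Finset.Icc_add_one_left_eq_Ioc, ← Finset.Ico_add_one_right_eq_Icc]
    congr 1
    omega
  rw [h1, ← Nat.filter_coprime_Ico_eq_totient N (t + 1)]
  congr 1
  apply Finset.filter_congr
  intro x _
  simp [Nat.Coprime, Nat.gcd_comm]

lemma cop_mul_add (N q s : ℕ) : Cop (N * q + s) N = q * N.totient + Cop s N := by
  induction q with
  | zero => simp
  | succ q ih =>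
    have : N * (q + 1) + s = (N * q + s) + N := by ring
    rw [this, cop_period, ih]
    ring

lemma cop_pos (N s : ℕ) (hs : 1 ≤ s) : 1 ≤ Cop s N := by
  unfold Cop
  rw [Nat.succ_le_iff, Finset.card_pos]
  exact ⟨1, Finset.mem_filter.mpr ⟨Finset.mem_Ioc.mpr ⟨one_pos, hs⟩, Nat.coprime_one_left N⟩⟩

lemma even_odd_step (N m P : ℕ) (hN : N ≠ 0) (hP : 0 < P) :
    ∑ J ∈ evenSub N, (N / (∏ p ∈ J, p) * m) / P
      = (∑ J ∈ oddSub N, (N / (∏ p ∈ J, p) * m) / P) + N.totient * (m / P)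
        + Cop (N * (m % P) / P) N := by
  have hdvd : ∀ J ∈ N.primeFactors.powerset, (∏ p ∈ J, p) ∣ N := fun J hJ =>
    dvd_trans (Finset.prod_dvd_prod_of_subset _ _ _ (Finset.mem_powerset.mp hJ))
      (Nat.prod_primeFactors_dvd N)
  -- rewrite each term as (N*m/P) / ∏
  have hα : ∀ J ∈ N.primeFactors.powerset,
      (N / (∏ p ∈ J, p) * m) / P = (N * m / P) / (∏ p ∈ J, p) := by
    intro J hJ
    obtain ⟨c, hc⟩ := hdvd J hJ
    have hd0 : 0 < ∏ p ∈ J, p := by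
      apply Finset.prod_pos
      intro p hp
      exact (Nat.prime_of_mem_primeFactors (Finset.mem_powerset.mp hJ hp)).pos
    rw [hc, Nat.mul_div_cancel_left _ hd0, Nat.div_div_eq_div_mul]
    rw [show (∏ p ∈ J, p) * c * m = (∏ p ∈ J, p) * (c * m) by ring,
      show P * (∏ p ∈ J, p) = (∏ p ∈ J, p) * P by ring,
      Nat.mul_div_mul_left _ _ hd0]
  -- the inclusion–exclusion identity specialized
  have hie := cop_ie N hN (N * m / P)
  -- split powerset into even and odd
  have hsplit : ∑ J ∈ N.primeFactors.powerset, (-1 : ℤ) ^ J.card * ((N * m / P) / ∏ p ∈ J, p : ℕ)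
      = (∑ J ∈ evenSub N, ((N * m / P) / ∏ p ∈ J, p : ℕ) : ℤ)
        - (∑ J ∈ oddSub N, ((N * m / P) / ∏ p ∈ J, p : ℕ) : ℤ) := by
    rw [← Finset.sum_filter_add_sum_filter_not N.primeFactors.powerset (fun J => Even J.card)]
    have h1 : ∀ J ∈ N.primeFactors.powerset.filter (fun J => Even J.card),
        (-1 : ℤ) ^ J.card * ((N * m / P) / ∏ p ∈ J, p : ℕ)
          = ((N * m / P) / ∏ p ∈ J, p : ℕ) := by
      intro J hJ
      rw [(Finset.mem_filter.mp hJ).2.neg_one_pow, one_mul]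
    have h2 : ∀ J ∈ N.primeFactors.powerset.filter (fun J => ¬ Even J.card),
        (-1 : ℤ) ^ J.card * ((N * m / P) / ∏ p ∈ J, p : ℕ)
          = -((N * m / P) / ∏ p ∈ J, p : ℕ) := by
      intro J hJ
      rw [(Nat.not_even_iff_odd.mp (Finset.mem_filter.mp hJ).2).neg_one_pow, neg_one_mul]
    rw [Finset.sum_congr rfl h1, Finset.sum_congr rfl h2, Finset.sum_neg_distrib]
    have : N.primeFactors.powerset.filter (fun J => ¬ Even J.card) = oddSub N := by
      unfold oddSub
      apply Finset.filter_congr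
      intro J _
      exact Nat.not_even_iff_odd
    rw [this]
    rfl
  -- decompose N*m/P
  have hT : N * m / P = N * (m / P) + N * (m % P) / P := by
    conv_lhs => rw [show N * m = N * (m % P) + (N * (m / P)) * P by
      conv_lhs => rw [← Nat.mod_add_div m P]
      ring]
    rw [Nat.add_mul_div_right _ _ hP]
    ring
  have hcop : Cop (N * m / P) N
      = N.totient * (m / P) + Cop (N * (m % P) / P) N := by
    rw [hT, cop_mul_add]
    ring
  rw [hsplit, hcop] at hie
  -- put everything over ℕ
  have e1 : ∑ J ∈ evenSub N, (N / (∏ p ∈ J, p) * m) / P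
      = ∑ J ∈ evenSub N, (N * m / P) / (∏ p ∈ J, p) := by
    apply Finset.sum_congr rfl
    intro J hJ
    exact hα J (Finset.mem_filter.mp hJ).1
  have e2 : ∑ J ∈ oddSub N, (N / (∏ p ∈ J, p) * m) / P
      = ∑ J ∈ oddSub N, (N * m / P) / (∏ p ∈ J, p) := by
    apply Finset.sum_congr rfl
    intro J hJ
    exact hα J (Finset.mem_filter.mp hJ).1
  rw [e1, e2]
  clear hT hcop hα hdvd hsplit e1 e2
  set x := N.totient * (m / P) with hx
  have h2 : ((∑ J ∈ evenSub N, N * m / P / ∏ p ∈ J, p : ℕ) : ℤ)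
      = ((∑ J ∈ oddSub N, N * m / P / ∏ p ∈ J, p : ℕ) : ℤ)
        + ((x + Cop (N * (m % P) / P) N : ℕ) : ℤ) := by
    push_cast at hie ⊢
    linarith
  rw [add_assoc]
  exact_mod_cast h2

lemma log_lt_of_lt {p n b : ℕ} (h : n < b) : Nat.log p n < b :=
  lt_of_le_of_lt (Nat.log_le_self p n) h

lemma quot_mul_le {N m d : ℕ} : N / d * m ≤ N * m :=
  Nat.mul_le_mul_right m (Nat.div_le_self N d)

lemma Bnum_fact (p : ℕ) [hp : Fact p.Prime] (N m b : ℕ) (hb : N * m < b) :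
    (Bnum N m).factorization p
      = ∑ e ∈ Finset.Ico 1 b, ∑ J ∈ evenSub N, (N / (∏ q ∈ J, q) * m) / p ^ e := by
  unfold Bnum
  rw [Nat.factorization_prod (fun J _ => Nat.factorial_ne_zero _), Finsupp.finset_sum_apply]
  rw [Finset.sum_comm]
  apply Finset.sum_congr rfl
  intro J _
  rw [Nat.factorization_def _ hp.out, padicValNat_factorial
    (log_lt_of_lt (lt_of_le_of_lt quot_mul_le hb))]

lemma Bden_fact (p : ℕ) [hp : Fact p.Prime] (N m b : ℕ) (hN : N ≠ 0) (hb : N * m < b) :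
    (Bden N m).factorization p
      = ∑ e ∈ Finset.Ico 1 b,
          ((∑ J ∈ oddSub N, (N / (∏ q ∈ J, q) * m) / p ^ e) + N.totient * (m / p ^ e)) := by
  unfold Bden
  rw [Nat.factorization_mul (Finset.prod_ne_zero_iff.mpr (fun J _ => Nat.factorial_ne_zero _))
    (pow_ne_zero _ (Nat.factorial_ne_zero _))]
  rw [Nat.factorization_pow]
  simp only [Finsupp.coe_add, Finsupp.coe_smul, Pi.add_apply, Pi.smul_apply, smul_eq_mul]
  rw [Nat.factorization_prod (fun J _ => Nat.factorial_ne_zero _), Finsupp.finset_sum_apply]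
  have hm : m ≤ N * m := Nat.le_mul_of_pos_left m (Nat.pos_of_ne_zero hN)
  have h1 : ∀ J ∈ oddSub N, ((N / (∏ q ∈ J, q) * m).factorial.factorization) p
      = ∑ e ∈ Finset.Ico 1 b, (N / (∏ q ∈ J, q) * m) / p ^ e := by
    intro J _
    rw [Nat.factorization_def _ hp.out, padicValNat_factorial
      (log_lt_of_lt (lt_of_le_of_lt quot_mul_le hb))]
  rw [Finset.sum_congr rfl h1, Finset.sum_comm]
  rw [Nat.factorization_def _ hp.out, padicValNat_factorial
    (log_lt_of_lt (lt_of_le_of_lt hm hb))]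
  rw [Finset.sum_add_distrib, Finset.mul_sum]

lemma Bfact_eq (p : ℕ) [hp : Fact p.Prime] (N m b : ℕ) (hN : N ≠ 0) (hb : N * m < b) :
    (Bnum N m).factorization p
      = (Bden N m).factorization p
        + ∑ e ∈ Finset.Ico 1 b, Cop (N * (m % p ^ e) / p ^ e) N := by
  rw [Bnum_fact p N m b hb, Bden_fact p N m b hN hb, ← Finset.sum_add_distrib]
  apply Finset.sum_congr rfl
  intro e _
  rw [even_odd_step N m (p ^ e) hN (pow_pos hp.out.pos e)]

lemma harm_sub (n f : ℕ) :
    harm (n + f) - harm n = ∑ i ∈ Finset.range f, (1 : ℚ) / ((n : ℚ) + i + 1) := by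
  induction f with
  | zero => simp
  | succ f ih =>
    have h1 : n + (f + 1) = (n + f) + 1 := by omega
    rw [h1]
    unfold harm
    rw [Finset.sum_range_succ, Finset.sum_range_succ]
    unfold harm at ih
    push_cast
    push_cast at ih
    linarith [ih]

lemma arith_key (p a L Nt i j e' : ℕ) (hp : 2 ≤ p) (ha : a < p) (hLN : L ≤ Nt)
    (hi : i + 1 ≤ L * a / p) (hdvd : p ^ e' ∣ L * j + (i + 1)) :
    p ^ (e' + 1) ≤ Nt * ((a + p * j) % p ^ (e' + 1)) := by
  have hp0 : 0 < p := by omega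
  have hpe : 0 < p ^ e' := pow_pos hp0 e'
  set s := j % p ^ e' with hs
  have hjd : j = s + p ^ e' * (j / p ^ e') := (Nat.mod_add_div j (p ^ e')).symm
  have hmod : (a + p * j) % p ^ (e' + 1) = a + p * s := by
    conv_lhs => rw [hjd]
    have h2 : a + p * (s + p ^ e' * (j / p ^ e')) = (a + p * s) + p ^ (e' + 1) * (j / p ^ e') := by
      rw [pow_succ]
      ring
    rw [h2, Nat.add_mul_mod_self_left]
    apply Nat.mod_eq_of_lt
    have hslt : s < p ^ e' := Nat.mod_lt _ hpe
    calc a + p * s < p + p * s := by omega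
      _ = p * (s + 1) := by ring
      _ ≤ p * p ^ e' := Nat.mul_le_mul_left p hslt
      _ = p ^ (e' + 1) := by rw [pow_succ]; ring
  have hdvd2 : p ^ e' ∣ L * s + (i + 1) := by
    have h2 : L * j + (i + 1) = (L * s + (i + 1)) + p ^ e' * (L * (j / p ^ e')) := by
      conv_lhs => rw [hjd]
      ring
    rw [h2, add_comm] at hdvd
    exact (Nat.dvd_add_right ⟨L * (j / p ^ e'), rfl⟩).mp hdvd
  have h3 : p ^ e' ≤ L * s + (i + 1) := Nat.le_of_dvd (by omega) hdvd2
  have h4 : (i + 1) * p ≤ L * a := (Nat.le_div_iff_mul_le hp0).mp hi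
  rw [hmod]
  calc p ^ (e' + 1) = p * p ^ e' := by rw [pow_succ]; ring
    _ ≤ p * (L * s + (i + 1)) := Nat.mul_le_mul_left p h3
    _ = (p * s) * L + (i + 1) * p := by ring
    _ ≤ (p * s) * Nt + L * a := Nat.add_le_add (Nat.mul_le_mul_left _ hLN) h4
    _ ≤ (p * s) * Nt + Nt * a := Nat.add_le_add_left (by
        calc L * a ≤ Nt * a := Nat.mul_le_mul_right a hLN) _
    _ = Nt * (a + p * s) := by ring

lemma norm_le_inv_p (p : ℕ) [hp : Fact p.Prime] (x : ℚ) (hx0 : x ≠ 0)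
    (hx : 1 ≤ padicValRat p x) : ‖(x : ℚ_[p])‖ ≤ ((p : ℝ))⁻¹ := by
  rw [Padic.eq_padicNorm, padicNorm.eq_zpow_of_nonzero hx0]
  have hp1 : (1 : ℝ) ≤ (p : ℝ) := by exact_mod_cast hp.out.one_lt.le
  have hcast : (((p : ℚ) ^ (-padicValRat p x) : ℚ) : ℝ) = (p : ℝ) ^ (-padicValRat p x) := by
    push_cast
    rfl
  rw [hcast]
  calc (p : ℝ) ^ (-padicValRat p x) ≤ (p : ℝ) ^ (-1 : ℤ) :=
        zpow_le_zpow_right₀ hp1 (by omega)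
    _ = ((p : ℝ))⁻¹ := by simp

lemma Bnum_ne_zero (N m : ℕ) : Bnum N m ≠ 0 :=
  Finset.prod_ne_zero_iff.mpr (fun J _ => Nat.factorial_ne_zero _)
lemma Bden_ne_zero (N m : ℕ) : Bden N m ≠ 0 :=
  mul_ne_zero (Finset.prod_ne_zero_iff.mpr (fun J _ => Nat.factorial_ne_zero _))
    (pow_ne_zero _ (Nat.factorial_ne_zero _))

lemma Bfact_le (p : ℕ) [hp : Fact p.Prime] (N m : ℕ) (hN : N ≠ 0) :
    (Bden N m).factorization p ≤ (Bnum N m).factorization p := by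
  rw [Bfact_eq p N m (N * m + 1) hN (Nat.lt_succ_self _)]
  exact Nat.le_add_right _ _

lemma BBvec_eq {k : ℕ} (N : Fin k → ℕ) (m : ℕ) :
    BBvec N m = ((∏ i, Bnum (N i) m : ℕ) : ℚ) / ((∏ i, Bden (N i) m : ℕ) : ℚ) := by
  unfold BBvec BB
  rw [Finset.prod_div_distrib]
  push_cast
  rfl

lemma term_val (p : ℕ) [hp : Fact p.Prime] (A B : ℕ) (hA : A ≠ 0) (hB : B ≠ 0)
    (h : B.factorization p + 1 ≤ A.factorization p) :
    1 ≤ padicValRat p ((A : ℚ) / (B : ℚ)) := by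
  rw [padicValRat.div (p := p) (by exact_mod_cast hA) (by exact_mod_cast hB),
    padicValRat.of_nat, padicValRat.of_nat]
  rw [← Nat.factorization_def A hp.out, ← Nat.factorization_def B hp.out]
  omega

/-- Lemma 1 (Krattenthaler–Rivoal): for a prime `p`, `0 ≤ a < p`, `j ≥ 0`, positive
integers `N_1, …, N_k`, and `1 ≤ L ≤ max(N_1, …, N_k)`, one has
`𝐁_𝐍(a+pj)·(H_{Lj+⌊La/p⌋} − H_{Lj}) ∈ pℤ_p`, i.e. its `p`-adic norm is at most `1/p`. -/
theorem BBvec_mul_harm_diff_mem_p_zp (p : ℕ) [hp : Fact p.Prime] (a j : ℕ) (ha : a < p)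
    {k : ℕ} (N : Fin k → ℕ) (hN : ∀ i, 0 < N i)
    (L : ℕ) (hL1 : 1 ≤ L) (hL2 : L ≤ Finset.univ.sup N) :
    ‖((BBvec N (a + p * j) * (harm (L * j + L * a / p) - harm (L * j)) : ℚ) : ℚ_[p])‖
      ≤ ((p : ℝ))⁻¹ := by
  have hp2 : 2 ≤ p := hp.out.two_le
  have hpinv : (0 : ℝ) ≤ ((p : ℝ))⁻¹ := by positivity
  set m := a + p * j with hm
  set f := L * a / p with hf
  by_cases hf0 : f = 0
  · rw [hf0]
    simp only [add_zero, sub_self, mul_zero, Rat.cast_zero, norm_zero]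
    exact hpinv
  -- k > 0, and pick t achieving the sup
  have hk : (Finset.univ : Finset (Fin k)).Nonempty := by
    rcases Nat.eq_zero_or_pos k with rfl | hk
    · simp at hL2
      omega
    · have : Nonempty (Fin k) := Fin.pos_iff_nonempty.mp hk
      exact Finset.univ_nonempty
  obtain ⟨t, -, ht⟩ := Finset.exists_mem_eq_sup _ hk N
  rw [ht] at hL2
  set Nt := N t with hNt
  -- rewrite the harmonic difference as a sum
  rw [harm_sub, Finset.mul_sum]
  rw [Rat.cast_sum]
  apply IsUltrametricDist.norm_sum_le_of_forall_le_of_nonneg hpinv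
  intro i hi
  have hif : i + 1 ≤ f := Finset.mem_range.mp hi
  set n := L * j + i + 1 with hn
  have hterm : BBvec N m * (1 / ((L * j : ℕ) + (i : ℚ) + 1))
      = ((∏ s, Bnum (N s) m : ℕ) : ℚ) / (((∏ s, Bden (N s) m) * n : ℕ) : ℚ) := by
    rw [BBvec_eq, div_mul_div_comm, mul_one]
    congr 1
    push_cast [hn]
    ring
  rw [hterm]
  set A := ∏ s, Bnum (N s) m with hA
  set B := ∏ s, Bden (N s) m with hB
  have hAne : A ≠ 0 := Finset.prod_ne_zero_iff.mpr (fun s _ => Bnum_ne_zero _ _)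
  have hBne : B ≠ 0 := Finset.prod_ne_zero_iff.mpr (fun s _ => Bden_ne_zero _ _)
  have hnne : n ≠ 0 := by omega
  set v := n.factorization p with hv
  -- bounds
  have hnm : n ≤ Nt * m := by
    have h1 : i + 1 ≤ Nt * a := by
      calc i + 1 ≤ L * a / p := hif
        _ ≤ L * a := Nat.div_le_self _ _
        _ ≤ Nt * a := Nat.mul_le_mul_right a hL2
    have h2 : L * j ≤ Nt * (p * j) := by
      calc L * j ≤ Nt * j := Nat.mul_le_mul_right j hL2
        _ ≤ Nt * (p * j) := Nat.mul_le_mul_left Nt (by nlinarith)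
    calc n = L * j + (i + 1) := by omega
      _ ≤ Nt * (p * j) + Nt * a := Nat.add_le_add h2 h1
      _ = Nt * m := by rw [hm]; ring
  have hvn : v + 1 ≤ Nt * m := by
    have h1 : p ^ v ∣ n := Nat.ordProj_dvd n p
    have h2 : p ^ v ≤ n := Nat.le_of_dvd (by omega) h1
    have h3 : v < 2 ^ v := Nat.lt_two_pow_self
    have h4 : 2 ^ v ≤ p ^ v := Nat.pow_le_pow_left hp2 v
    omega
  -- the key fact for index t
  have hkey : ∀ s : Fin k, (Bden (N s) m).factorization p
      + (if s = t then v + 1 else 0) ≤ (Bnum (N s) m).factorization p := by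
    intro s
    by_cases hst : s = t
    · subst hst
      rw [if_pos rfl]
      rw [Bfact_eq p (N s) m (N s * m + 1) (hN s).ne' (Nat.lt_succ_self _)]
      have hsub : Finset.Ico 1 (v + 2) ⊆ Finset.Ico 1 (N s * m + 1) := by
        apply Finset.Ico_subset_Ico le_rfl
        rw [← hNt]
        omega
      have hone : ∀ e ∈ Finset.Ico 1 (v + 2), 1 ≤ Cop (N s * (m % p ^ e) / p ^ e) (N s) := by
        intro e he
        rw [Finset.mem_Ico] at he
        apply cop_pos
        rw [Nat.one_le_div_iff (pow_pos hp.out.pos e)]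
        obtain ⟨e', rfl⟩ : ∃ e', e = e' + 1 := ⟨e - 1, by omega⟩
        apply arith_key p a L (N s) i j e' hp2 ha (by rw [← hNt]; exact hL2) hif
        have hd1 : p ^ e' ∣ p ^ v := pow_dvd_pow p (by omega)
        have hd2 : p ^ v ∣ n := Nat.ordProj_dvd n p
        have : p ^ e' ∣ n := dvd_trans hd1 hd2
        rwa [hn, add_assoc] at this
      have : v + 1 ≤ ∑ e ∈ Finset.Ico 1 (N s * m + 1), Cop (N s * (m % p ^ e) / p ^ e) (N s) := by
        calc v + 1 = ∑ e ∈ Finset.Ico 1 (v + 2), 1 := by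
              rw [Finset.sum_const, Nat.card_Ico, smul_eq_mul]
              omega
          _ ≤ ∑ e ∈ Finset.Ico 1 (v + 2), Cop (N s * (m % p ^ e) / p ^ e) (N s) :=
              Finset.sum_le_sum hone
          _ ≤ ∑ e ∈ Finset.Ico 1 (N s * m + 1), Cop (N s * (m % p ^ e) / p ^ e) (N s) :=
              Finset.sum_le_sum_of_subset hsub
      omega
    · rw [if_neg hst, add_zero]
      exact Bfact_le p (N s) m (hN s).ne'
  have hfact : (B * n).factorization p + 1 ≤ A.factorization p := by
    have hBn : (B * n).factorization p = B.factorization p + v := by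
      rw [Nat.factorization_mul hBne hnne]
      rfl
    have hAf : A.factorization p = ∑ s, (Bnum (N s) m).factorization p := by
      rw [hA, Nat.factorization_prod (fun s _ => Bnum_ne_zero _ _), Finsupp.finset_sum_apply]
    have hBf : B.factorization p = ∑ s, (Bden (N s) m).factorization p := by
      rw [hB, Nat.factorization_prod (fun s _ => Bden_ne_zero _ _), Finsupp.finset_sum_apply]
    have hsum := Finset.sum_le_sum (fun s (_ : s ∈ Finset.univ) => hkey s)
    rw [Finset.sum_add_distrib, Finset.sum_ite_eq' Finset.univ t
      (fun _ => v + 1)] at hsum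
    simp only [Finset.mem_univ, if_pos] at hsum
    omega
  apply norm_le_inv_p
  · apply div_ne_zero
    · exact_mod_cast hAne
    · exact_mod_cast mul_ne_zero hBne hnne
  · exact term_val p A (B * n) hAne (mul_ne_zero hBne hnne) hfact
end

section
/- For all integers m ≥ 1 and N ≥ 1, the integer (Nm)!/m!^N is divisible by N!, i.e., (Nm)!/m!^N ∈ N!·ℤ. -/
/-- For all integers `m ≥ 1` and `N ≥ 1`, the integer `B_N(m) = (Nm)!/m!^N` is
divisible by `N!`; equivalently, `N!·m!^N` divides `(Nm)!`. -/
theorem factorial_mul_factorial_pow_dvd_factorial_mul (m N : ℕ) (hm : 1 ≤ m) (hN : 1 ≤ N) :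
    N.factorial * (m.factorial) ^ N ∣ (N * m).factorial := by
  refine ⟨Nat.uniformBell N m, ?_⟩
  rw [← Nat.uniformBell_mul_eq N (Nat.one_le_iff_ne_zero.mp hm)]
  ring
end

section
/- For any prime p, any non-negative integers a and j with 0 ≤ a < p, any positive integers N_1, N_2, …, N_k, and any integer L with 1 ≤ L ≤ max(N_1,…,N_k), the p-adic valuation of B_𝐍(a+pj)·(H_{Lj+⌊La/p⌋} − H_{Lj}) is at least 1 + v_p(M_𝐍) − v_p(Θ_L), i.e., B_𝐍(a+pj)·(H_{Lj+⌊La/p⌋} − H_{Lj}) ∈ p·(M_𝐍/Θ_L)·ℤ_p. -/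
open Finset

/-- `B_N(m) = (Nm)!/m!^N`. -/
noncomputable def BQ (N m : ℕ) : ℚ := ((N * m).factorial : ℚ) / ((m.factorial : ℚ)) ^ N

/-- `B_𝐍(m) = ∏_{j=1}^k B_{N_j}(m)` for a vector `𝐍 = (N_1, …, N_k)`. -/
noncomputable def BQvec {k : ℕ} (N : Fin k → ℕ) (m : ℕ) : ℚ := ∏ i, BQ (N i) m

/-- `Θ_L`, the denominator of the harmonic number `H_L` written as a reduced
fraction (equal to `L!/gcd(L!, L!·H_L)`). -/
def Theta (L : ℕ) : ℕ := (harm L).den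


set_option linter.unusedSectionVars false
set_option linter.unusedTactic false
set_option linter.unusedVariables false
set_option linter.unnecessarySimpa false



section NatLemmas

variable {p : ℕ} [hp : Fact p.Prime]

/-- step lemma for divisor monotonicity -/
lemma KR.div_step (q x r : ℕ) (hr : 1 ≤ r) :
    (x + 1) / q + x * r / q ≤ x / q + (x + 1) * r / q := by
  rcases Nat.eq_zero_or_pos q with hq | hq
  · simp [hq]
  rw [Nat.succ_div]
  split_ifs with hdvd
  · -- q ∣ x + 1
    obtain ⟨s, hs⟩ := hdvd
    have hs1 : 1 ≤ s := by
      rcases Nat.eq_zero_or_pos s with h0 | h0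
      · subst h0; simp at hs
      · exact h0
    have hdiv : (x + 1) * r / q = s * r := by
      rw [hs, mul_assoc, Nat.mul_div_cancel_left _ hq]
    have hlt : x * r / q < (x + 1) * r / q := by
      rw [hdiv, Nat.div_lt_iff_lt_mul hq]
      have h1 : x * r < (x + 1) * r := by
        have := Nat.lt_succ_self x
        exact Nat.mul_lt_mul_of_lt_of_le this (le_refl r) hr
      calc x * r < (x + 1) * r := h1
        _ = s * r * q := by rw [hs]; ring
    have hd2 : (x + 1) / q = s := by rw [hs, Nat.mul_div_cancel_left _ hq]
    omega
  · have : x * r / q ≤ (x + 1) * r / q :=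
      Nat.div_le_div_right (Nat.mul_le_mul_right r (Nat.le_succ x))
    omega

lemma KR.div_mono (q r : ℕ) (hr : 1 ≤ r) : ∀ {y x : ℕ}, y ≤ x →
    y * r / q + x / q ≤ x * r / q + y / q := by
  intro y x hxy
  induction x, hxy using Nat.le_induction with
  | base => omega
  | succ x hyx ih =>
      have := KR.div_step q x r hr
      omega

lemma KR.carry_id (x m q : ℕ) : x * m / q = x * (m / q) + x * (m % q) / q := by
  rcases Nat.eq_zero_or_pos q with hq | hq
  · simp [hq]
  conv_lhs => rw [← Nat.div_add_mod m q]
  rw [Nat.mul_add, mul_comm x (q * (m / q)), mul_assoc, mul_comm q, add_comm,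
    Nat.add_mul_div_right _ _ hq, add_comm, mul_comm (m / q) x]

/-- truncated Legendre sum -/
def KR.SL (p n b : ℕ) : ℕ := ∑ t ∈ range b, n / p ^ (t + 1)

lemma KR.legendre {n b : ℕ} (hb : Nat.log p n < b + 1) :
    padicValNat p (n.factorial) = KR.SL p n b := by
  rw [padicValNat_factorial hb, KR.SL, Finset.sum_Ico_eq_sum_range]
  simp [add_comm]

lemma KR.UB {N m : ℕ} (hm : m ≠ 0) :
    N * padicValNat p (m.factorial) + padicValNat p (N.factorial)
      ≤ padicValNat p ((N * m).factorial) := by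
  have h := Nat.uniformBell_mul_eq N hm
  have hub : Nat.uniformBell N m ≠ 0 := by
    intro h0
    rw [h0] at h
    simp at h
    exact Nat.factorial_ne_zero _ h.symm
  calc N * padicValNat p (m.factorial) + padicValNat p (N.factorial)
      ≤ padicValNat p (Nat.uniformBell N m)
          + (padicValNat p ((m.factorial) ^ N) + padicValNat p (N.factorial)) := by
        rw [padicValNat.pow]
        omega
    _ = padicValNat p (Nat.uniformBell N m * (m.factorial) ^ N * (N.factorial)) := by
        rw [padicValNat.mul (mul_ne_zero hub (pow_ne_zero _ (Nat.factorial_ne_zero m)))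
            (Nat.factorial_ne_zero N),
          padicValNat.mul hub (pow_ne_zero _ (Nat.factorial_ne_zero m))]
        omega
    _ = padicValNat p ((N * m).factorial) := by rw [h]

lemma KR.wit {d c x g : ℕ} (hdvd : p ^ d ∣ c) (h1 : x < c) (h2 : c ≤ x + g) :
    x / p ^ d + 1 ≤ (x + g) / p ^ d := by
  have hq : 0 < p ^ d := Nat.pow_pos hp.out.pos
  obtain ⟨s, rfl⟩ := hdvd
  have hs : 1 ≤ s := by
    rcases Nat.eq_zero_or_pos s with h0 | h0
    · subst h0; simp at h1
    · exact h0
  have hx : x / p ^ d < s := by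
    rw [Nat.div_lt_iff_lt_mul hq, mul_comm s (p ^ d)]
    exact h1
  have hle : s ≤ (x + g) / p ^ d := by
    rw [Nat.le_div_iff_mul_le hq, mul_comm s (p ^ d)]
    exact h2
  omega

end NatLemmas

section Part3
variable {p : ℕ} [hp : Fact p.Prime]

lemma KR.val_prod {α : Type*} (s : Finset α) (F : α → ℚ) (h : ∀ i ∈ s, F i ≠ 0) :
    padicValRat p (∏ i ∈ s, F i) = ∑ i ∈ s, padicValRat p (F i) := by
  classical
  induction s using Finset.induction_on with
  | empty => simp
  | insert _ _ ha ih =>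
      rename_i a s
      rw [Finset.prod_insert ha, Finset.sum_insert ha,
        padicValRat.mul (h a (Finset.mem_insert_self a s))
          (Finset.prod_ne_zero_iff.2 fun i hi => h i (Finset.mem_insert_of_mem hi)),
        ih fun i hi => h i (Finset.mem_insert_of_mem hi)]

lemma KR.val_sum_nonneg {α : Type*} (s : Finset α) (F : α → ℚ)
    (hpos : ∀ i ∈ s, 0 < F i) (hval : ∀ i ∈ s, 0 ≤ padicValRat p (F i)) :
    0 ≤ padicValRat p (∑ i ∈ s, F i) := by
  classical
  induction s using Finset.induction_on with
  | empty => simp [padicValRat.zero]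
  | insert _ _ ha ih =>
      rename_i a s
      rw [Finset.sum_insert ha]
      rcases Finset.eq_empty_or_nonempty s with rfl | hs
      · simpa using hval a (Finset.mem_insert_self a _)
      · have hS : 0 < ∑ i ∈ s, F i :=
          Finset.sum_pos (fun i hi => hpos i (Finset.mem_insert_of_mem hi)) hs
        have hFa : 0 < F a := hpos a (Finset.mem_insert_self a _)
        have hne : F a + ∑ i ∈ s, F i ≠ 0 := by positivity
        have h1 := padicValRat.min_le_padicValRat_add (p := p) hne
        have h2 := ih (fun i hi => hpos i (Finset.mem_insert_of_mem hi))
          (fun i hi => hval i (Finset.mem_insert_of_mem hi))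
        have h3 := hval a (Finset.mem_insert_self a _)
        have h4 := le_min h3 h2
        omega

lemma KR.padicNorm_le_padicNorm {x y : ℚ} (hy : y ≠ 0)
    (h : x ≠ 0 → padicValRat p y ≤ padicValRat p x) :
    padicNorm p x ≤ padicNorm p y := by
  by_cases hx : x = 0
  · subst hx
    simp only [padicNorm.zero]
    exact padicNorm.nonneg y
  · rw [padicNorm.eq_zpow_of_nonzero hx, padicNorm.eq_zpow_of_nonzero hy]
    apply zpow_le_zpow_right₀
    · exact_mod_cast hp.out.one_lt.le
    · simp only [neg_le_neg_iff]
      exact h hx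

lemma KR.val_den_eq {q : ℚ} (hneg : padicValRat p q < 0) :
    (padicValNat p q.den : ℤ) = -padicValRat p q := by
  have hd := padicValRat_def p q
  have hden1 : 1 ≤ padicValNat p q.den := by
    by_contra hcon
    push_neg at hcon
    rw [hd] at hneg
    omega
  have hpden : p ∣ q.den := dvd_of_one_le_padicValNat hden1
  have hpnum : ¬ (p : ℤ) ∣ q.num := by
    intro hdvd
    have h1 : p ∣ q.num.natAbs := by
      have := Int.natAbs_dvd_natAbs.mpr hdvd
      simpa using this
    have hcop := q.reduced
    have h2 : p ∣ Nat.gcd q.num.natAbs q.den := Nat.dvd_gcd h1 hpden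
    rw [Nat.Coprime] at hcop
    rw [hcop] at h2
    have := Nat.le_of_dvd one_pos h2
    have := hp.out.two_le
    omega
  have h0 : padicValInt p q.num = 0 := padicValInt.eq_zero_of_not_dvd hpnum
  rw [hd, h0]
  omega

lemma KR.harm_pos {n : ℕ} (hn : 1 ≤ n) : 0 < harm n := by
  apply Finset.sum_pos
  · intro i _
    positivity
  · exact ⟨0, Finset.mem_range.2 (by omega)⟩

lemma KR.harm_add (x n : ℕ) :
    harm (x + n) = harm x + ∑ i ∈ Finset.range n, (1 : ℚ) / ((x : ℚ) + i + 1) := by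
  induction n with
  | zero => simp [harm]
  | succ n ih =>
      rw [← Nat.add_assoc, harm, Finset.sum_range_succ, ← harm, ih, Finset.sum_range_succ]
      push_cast
      ring

/-- splitting the harmonic number according to divisibility by `p` -/
lemma KR.harm_split (L : ℕ) (hp2 : 2 ≤ p) :
    harm L = (∑ i ∈ (Finset.range L).filter (fun i => ¬ (p ∣ (i + 1))), (1 : ℚ) / ((i : ℚ) + 1))
      + harm (L / p) / p := by
  induction L with
  | zero => simp [harm]
  | succ L ih =>
      have hrs : harm (L + 1) = harm L + 1 / ((L : ℚ) + 1) := by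
        rw [harm, Finset.sum_range_succ, ← harm]
      rw [hrs, ih, Finset.range_add_one, Finset.filter_insert, Nat.succ_div]
      by_cases hdvd : p ∣ L + 1
      · rw [if_neg (by simpa using hdvd), if_pos hdvd]
        have hq : harm (L / p + 1) = harm (L / p) + 1 / ((L / p : ℕ) + 1 : ℚ) := by
          rw [harm, Finset.sum_range_succ, ← harm]
        rw [hq]
        have hco : ((L : ℚ) + 1) = (p : ℚ) * ((L / p : ℕ) + 1 : ℚ) := by
          obtain ⟨s, hs⟩ := hdvd
          have hs1 : 1 ≤ s := by
            rcases Nat.eq_zero_or_pos s with h0 | h0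
            · subst h0; omega
            · exact h0
          have hLp : L / p = s - 1 := by
            have h2 : L = p * (s - 1) + (p - 1) := by
              have h3 : p * s = p * (s - 1) + p := by
                cases s with
                | zero => omega
                | succ t => simp [Nat.mul_succ]
              omega
            rw [h2, Nat.mul_add_div (by omega : 0 < p), Nat.div_eq_of_lt (by omega)]
            omega
          have hsQ : ((L : ℚ) + 1) = (p : ℚ) * (s : ℚ) := by exact_mod_cast hs
          rw [hLp, hsQ]
          have : ((s - 1 : ℕ) : ℚ) = (s : ℚ) - 1 := by
            push_cast [hs1]
            ring
          rw [this]
          ring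
        rw [hco]
        have hp0 : ((p : ℚ)) ≠ 0 := by positivity
        have hP : ((L / p : ℕ) + 1 : ℚ) ≠ 0 := by positivity
        field_simp
        ring
      · rw [if_pos (by simpa using hdvd), if_neg hdvd, Nat.add_zero]
        rw [Finset.sum_insert (by simp)]
        push_cast
        ring

/-- The key dichotomy linking `Θ_L` and `H_{⌊L/p⌋}`. -/
lemma KR.theta_dichotomy {L : ℕ} (hL1 : 1 ≤ L) :
    (1 : ℤ) ≤ padicValRat p (harm (L / p)) + (padicValNat p (Theta L) : ℤ)
      ∨ harm (L / p) = 0 := by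
  by_cases hh0 : harm (L / p) = 0
  · right; exact hh0
  left
  by_cases hv : 1 ≤ padicValRat p (harm (L / p))
  · have : (0 : ℤ) ≤ (padicValNat p (Theta L) : ℤ) := by positivity
    omega
  push_neg at hv
  have hv0 : padicValRat p (harm (L / p)) ≤ 0 := by omega
  have hp2 : 2 ≤ p := hp.out.two_le
  have hsplit := KR.harm_split (p := p) L hp2
  -- the prime-to-p part S
  set S := ∑ i ∈ (Finset.range L).filter (fun i => ¬ (p ∣ (i + 1))), (1 : ℚ) / ((i : ℚ) + 1)
    with hS
  have hSval : 0 ≤ padicValRat p S := by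
    apply KR.val_sum_nonneg
    · intro i _
      positivity
    · intro i hi
      simp only [Finset.mem_filter] at hi
      have hne : ((i : ℚ) + 1) ≠ 0 := by positivity
      rw [one_div, padicValRat.inv]
      have : ((i : ℚ) + 1) = ((i + 1 : ℕ) : ℚ) := by push_cast; ring
      rw [this, padicValRat.of_nat, padicValNat.eq_zero_of_not_dvd hi.2]
      simp
  have hhp : harm (L / p) / p ≠ 0 := by
    apply div_ne_zero hh0
    have : (0 : ℚ) < p := by positivity
    exact ne_of_gt this
  have hvdiv : padicValRat p (harm (L / p) / p) = padicValRat p (harm (L / p)) - 1 := by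
    rw [padicValRat.div hh0 (by positivity : (p : ℚ) ≠ 0), padicValRat.self hp.out.one_lt]
  have hvdivneg : padicValRat p (harm (L / p) / p) < 0 := by omega
  have hLpos : harm L ≠ 0 := ne_of_gt (KR.harm_pos hL1)
  -- v (harm L) = v (harm (L/p)/p)
  have hvL : padicValRat p (harm L) = padicValRat p (harm (L / p)) - 1 := by
    rw [← hvdiv, hsplit]
    have hlt : padicValRat p (harm (L / p) / (p : ℚ)) < padicValRat p S :=
      lt_of_lt_of_le hvdivneg hSval
    have heq : (S + harm (L / p) / (p : ℚ)) + (-S) = harm (L / p) / (p : ℚ) := by ring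
    have h2 := padicValRat.min_le_padicValRat_add (p := p)
      (q := S + harm (L / p) / (p : ℚ)) (r := -S) (by rw [heq]; exact hhp)
    rw [heq, padicValRat.neg] at h2
    have hge : min (padicValRat p S) (padicValRat p (harm (L / p) / (p : ℚ)))
        ≤ padicValRat p (S + harm (L / p) / (p : ℚ)) := by
      apply padicValRat.min_le_padicValRat_add
      rw [← hsplit]
      exact hLpos
    apply le_antisymm
    · rcases min_le_iff.mp h2 with hc | hc
      · exact hc
      · exact absurd hc (not_le.mpr hlt)
    · calc padicValRat p (harm (L / p) / (p : ℚ))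
          = min (padicValRat p S) (padicValRat p (harm (L / p) / (p : ℚ))) :=
            (min_eq_right hlt.le).symm
        _ ≤ _ := hge
  -- conclude via denominator
  have hvLneg : padicValRat p (harm L) < 0 := by omega
  have hden := KR.val_den_eq (p := p) hvLneg
  rw [Theta]
  omega

end Part3

section Part2
variable {p : ℕ} [hp : Fact p.Prime]

lemma KR.SL_shift (n c : ℕ) : KR.SL p n (c + 1) = KR.SL p (n / p) c + n / p := by
  rw [KR.SL, Finset.sum_range_succ']
  congr 1
  · apply Finset.sum_congr rfl
    intro t _
    rw [Nat.div_div_eq_div_mul]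
    congr 1
    ring
  · rw [pow_one]

lemma KR.sum_bound {f g : ℕ → ℕ} {b E : ℕ} (hEb : E ≤ b)
    (h1 : ∀ t < E, g t + 1 ≤ f t) (h2 : ∀ t < b, g t ≤ f t) :
    (∑ t ∈ Finset.range b, g t) + E ≤ ∑ t ∈ Finset.range b, f t := by
  have hstep : ∀ t ∈ Finset.range b, g t + (if t < E then 1 else 0) ≤ f t := by
    intro t ht
    split_ifs with h
    · exact h1 t h
    · simpa using h2 t (Finset.mem_range.1 ht)
  have hsum := Finset.sum_le_sum hstep
  rw [Finset.sum_add_distrib, Finset.sum_boole] at hsum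
  have hfil : Finset.filter (fun t => t < E) (Finset.range b) = Finset.range E := by
    ext t
    simp only [Finset.mem_filter, Finset.mem_range]
    omega
  rw [hfil] at hsum
  simpa using hsum

lemma KR.claimS_L {L a j i : ℕ} (ha1 : 1 ≤ a) (hap : a < p)
    (hm2 : 2 ≤ a + p * j) (hi1 : 1 ≤ i) (hif : i ≤ L * a / p) :
    L * padicValNat p ((a + p * j).factorial) + padicValNat p (L.factorial)
      + padicValNat p (L * j + i) + 1 ≤ padicValNat p ((L * (a + p * j)).factorial) := by
  have hp1 : 1 < p := hp.out.one_lt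
  have hp0 : 0 < p := hp.out.pos
  have hg1 : 1 ≤ L * a / p := le_trans hi1 hif
  have hpLa : p ≤ L * a := by
    by_contra h
    push_neg at h
    rw [Nat.div_eq_of_lt h] at hg1
    omega
  have hLa0 : 0 < L * a := lt_of_lt_of_le hp0 hpLa
  have hL1 : 1 ≤ L := by
    rcases Nat.eq_zero_or_pos L with h0 | h0
    · subst h0; simp at hLa0
    · exact h0
  set e := padicValNat p (L * j + i) with he
  have hLji : 0 < L * j + i := by omega
  have hpe : p ^ e ∣ L * j + i := pow_padicValNat_dvd
  have hpei : p ^ e ≤ L * j + i := Nat.le_of_dvd hLji hpe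
  have hpg : (L * a / p) * p ≤ L * a := Nat.div_mul_le_self (L * a) p
  rcases Nat.eq_zero_or_pos j with hj | hj
  · -- j = 0 case
    subst hj
    simp only [Nat.mul_zero, Nat.zero_add, Nat.add_zero, Nat.mul_zero, Nat.zero_mul] at *
    have ha2 : 2 ≤ a := by omega
    have hva : padicValNat p (a.factorial) = 0 := by
      rw [KR.legendre (b := 0)]
      · simp [KR.SL]
      · have : Nat.log p a = 0 := Nat.log_eq_zero_iff.2 (Or.inl hap)
        omega
    have hei : p ^ (e + 1) ≤ L * a := by
      calc p ^ (e + 1) = p ^ e * p := by rw [pow_succ]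
        _ ≤ i * p := Nat.mul_le_mul_right p hpei
        _ ≤ (L * a / p) * p := Nat.mul_le_mul_right p hif
        _ ≤ L * a := hpg
    set b := Nat.log p (L * a) with hb
    have hb1 : e + 1 ≤ b := (Nat.le_log_iff_pow_le hp1 (by omega)).2 hei
    rw [KR.legendre (n := L * a) (b := b) (by omega),
      KR.legendre (n := L) (b := b) (by
        have := Nat.log_mono_right (b := p) (Nat.le_mul_of_pos_right L (show 0 < a by omega))
        omega)]
    rw [hva, Nat.mul_zero, Nat.zero_add]
    have key : (∑ t ∈ Finset.range b, L / p ^ (t + 1)) + (e + 1)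
        ≤ ∑ t ∈ Finset.range b, L * a / p ^ (t + 1) := by
      apply KR.sum_bound hb1
      · intro t ht
        set q := p ^ (t + 1) with hq
        have hq0 : 0 < q := Nat.pow_pos hp0
        have hqle : q ≤ L * a := by
          calc q ≤ p ^ (e + 1) := Nat.pow_le_pow_right (le_of_lt hp1) (by omega)
            _ ≤ L * a := hei
        rcases Nat.eq_zero_or_pos (L / q) with hQ | hQ
        · rw [hQ]
          rw [Nat.le_div_iff_mul_le hq0]
          omega
        · rw [Nat.le_div_iff_mul_le hq0, Nat.add_mul, Nat.one_mul]
          have h1 : L / q * q ≤ L := Nat.div_mul_le_self L q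
          have h2 : q ≤ L / q * q := Nat.le_mul_of_pos_left q hQ
          have h3 : 2 * L ≤ L * a := by
            calc 2 * L = L * 2 := by ring
              _ ≤ L * a := Nat.mul_le_mul_left L ha2
          omega
      · intro t ht
        exact Nat.div_le_div_right (Nat.le_mul_of_pos_right L (by omega))
    unfold KR.SL
    omega
  · -- j ≥ 1 case
    set m := a + p * j with hm
    have hpj : p ≤ p * j := Nat.le_mul_of_pos_right p hj
    have hm1 : p + 1 ≤ m := by omega
    have hm0 : 0 < m := by omega
    have hLm0 : 0 < L * m := by positivity
    have hLm : p ≤ L * m := by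
      calc p ≤ m := by omega
        _ ≤ L * m := Nat.le_mul_of_pos_left m hL1
    set b := Nat.log p (L * m) with hb
    have hb1 : 1 ≤ b := (Nat.le_log_iff_pow_le hp1 (by omega)).2 (by simpa [pow_one] using hLm)
    set g := L * a / p with hg
    -- key division identities
    have hkey : L * m / p = L * j + g := by
      have : L * m = L * a + (L * j) * p := by rw [hm]; ring
      rw [this, Nat.add_mul_div_right _ _ hp0, add_comm]
    have hmp : m / p = j := by
      have : m = a + j * p := by rw [hm]; ring
      rw [this, Nat.add_mul_div_right _ _ hp0, Nat.div_eq_of_lt hap, Nat.zero_add]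
    have hLjg : L * j + g ≤ L * m / p := le_of_eq hkey.symm
    have heb : e + 1 ≤ b := by
      apply (Nat.le_log_iff_pow_le hp1 (by omega)).2
      calc p ^ (e + 1) = p ^ e * p := by rw [pow_succ]
        _ ≤ (L * j + i) * p := Nat.mul_le_mul_right p hpei
        _ ≤ (L * j + g) * p := by
            have : i ≤ g := hif
            exact Nat.mul_le_mul_right p (by omega)
        _ = (L * m / p) * p := by rw [hkey]
        _ ≤ L * m := Nat.div_mul_le_self _ _
    set c := b - 1 with hc
    have hbc : b = c + 1 := by omega
    have hec : e ≤ c := by omega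
    -- Legendre rewrites
    have hLm' : padicValNat p ((L * m).factorial) = KR.SL p (L * j + g) c + (L * j + g) := by
      rw [KR.legendre (n := L * m) (b := c + 1) (by omega), KR.SL_shift, hkey]
    have hm' : padicValNat p (m.factorial) = KR.SL p j c + j := by
      rw [KR.legendre (n := m) (b := c + 1) (by
          have := Nat.log_mono_right (b := p) (Nat.le_mul_of_pos_left m hL1)
          omega), KR.SL_shift, hmp]
    have hLslegendre : padicValNat p (L.factorial) = KR.SL p L c := by
      apply KR.legendre
      have h1 : p ^ (Nat.log p L + 1) ≤ L * m := by
        calc p ^ (Nat.log p L + 1) = p ^ (Nat.log p L) * p := by rw [pow_succ]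
          _ ≤ L * p := Nat.mul_le_mul_right p (Nat.pow_log_le_self p (by omega))
          _ ≤ L * m := Nat.mul_le_mul_left L (by omega)
      have := (Nat.le_log_iff_pow_le hp1 (by omega)).2 h1
      omega
    have hLj0 : 0 < L * j := by positivity
    have hLjlegendre : padicValNat p ((L * j).factorial) = KR.SL p (L * j) c := by
      apply KR.legendre
      have h1 : p ^ (Nat.log p (L * j) + 1) ≤ L * m := by
        calc p ^ (Nat.log p (L * j) + 1) = p ^ (Nat.log p (L * j)) * p := by rw [pow_succ]
          _ ≤ (L * j) * p := Nat.mul_le_mul_right p (Nat.pow_log_le_self p (by omega))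
          _ = L * (p * j) := by ring
          _ ≤ L * m := Nat.mul_le_mul_left L (show p * j ≤ m by omega)
      have := (Nat.le_log_iff_pow_le hp1 (by omega)).2 h1
      omega
    have hjlegendre : padicValNat p (j.factorial) = KR.SL p j c := by
      apply KR.legendre
      have h1 : p ^ (Nat.log p j + 1) ≤ L * m := by
        calc p ^ (Nat.log p j + 1) = p ^ (Nat.log p j) * p := by rw [pow_succ]
          _ ≤ j * p := Nat.mul_le_mul_right p (Nat.pow_log_le_self p (by omega))
          _ = p * j := by ring
          _ ≤ m := by omega
          _ ≤ L * m := Nat.le_mul_of_pos_left m hL1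
      have := (Nat.le_log_iff_pow_le hp1 (by omega)).2 h1
      omega
    -- uniform bell bound
    have hUB : L * KR.SL p j c + KR.SL p L c ≤ KR.SL p (L * j) c := by
      have := KR.UB (p := p) (N := L) (m := j) (by omega)
      rw [hjlegendre, hLslegendre, hLjlegendre] at this
      exact this
    -- witness bound
    have hwit : KR.SL p (L * j) c + e ≤ KR.SL p (L * j + g) c := by
      apply KR.sum_bound hec
      · intro t ht
        apply KR.wit (c := L * j + i)
        · exact dvd_trans (pow_dvd_pow p (by omega)) hpe
        · omega
        · have : i ≤ g := hif
          omega
      · intro t ht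
        exact Nat.div_le_div_right (by omega)
    rw [hLm', hm']
    rw [Nat.mul_add]
    omega

lemma KR.claimS {L N a j i : ℕ} (hLN : L ≤ N) (ha1 : 1 ≤ a) (hap : a < p)
    (hm2 : 2 ≤ a + p * j) (hi1 : 1 ≤ i) (hif : i ≤ L * a / p) :
    N * padicValNat p ((a + p * j).factorial) + padicValNat p (N.factorial)
      + padicValNat p (L * j + i) + 1 ≤ padicValNat p ((N * (a + p * j)).factorial) := by
  have hp1 : 1 < p := hp.out.one_lt
  have hp0 : 0 < p := hp.out.pos
  have hSL := KR.claimS_L (p := p) (L := L) ha1 hap hm2 hi1 hif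
  set m := a + p * j with hm
  have hg1 : 1 ≤ L * a / p := le_trans hi1 hif
  have hpLa : p ≤ L * a := by
    by_contra h
    push_neg at h
    rw [Nat.div_eq_of_lt h] at hg1
    omega
  have hLa0 : 0 < L * a := lt_of_lt_of_le hp0 hpLa
  have hL1 : 1 ≤ L := by
    rcases Nat.eq_zero_or_pos L with h0 | h0
    · subst h0; simp at hLa0
    · exact h0
  have hN1 : 1 ≤ N := le_trans hL1 hLN
  have hm0 : 0 < m := by omega
  have hpm : ¬ p ∣ m := by
    intro hd
    rw [hm, add_comm] at hd
    have : p ∣ a := (Nat.dvd_add_right (dvd_mul_right p j)).1 hd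
    have := Nat.le_of_dvd (by omega) this
    omega
  have hNm0 : 0 < N * m := by positivity
  set b := Nat.log p (N * m) with hb
  -- Legendre rewrites at b
  have hLeN : padicValNat p ((N * m).factorial) = KR.SL p (N * m) b :=
    KR.legendre (by omega)
  have hLeL : padicValNat p ((L * m).factorial) = KR.SL p (L * m) b :=
    KR.legendre (by
      have := Nat.log_mono_right (b := p) (Nat.mul_le_mul_right m hLN)
      omega)
  have hLem : padicValNat p (m.factorial) = KR.SL p m b :=
    KR.legendre (by
      have := Nat.log_mono_right (b := p) (Nat.le_mul_of_pos_left m hN1)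
      omega)
  have hLeNf : padicValNat p (N.factorial) = KR.SL p N b :=
    KR.legendre (by
      have := Nat.log_mono_right (b := p) (Nat.le_mul_of_pos_right N hm0)
      omega)
  have hLeLf : padicValNat p (L.factorial) = KR.SL p L b :=
    KR.legendre (by
      have h1 : L ≤ N * m := le_trans hLN (Nat.le_mul_of_pos_right N hm0)
      have := Nat.log_mono_right (b := p) h1
      omega)
  -- carry decompositions
  set CN := ∑ t ∈ Finset.range b, N * (m % p ^ (t + 1)) / p ^ (t + 1) with hCN
  set CL := ∑ t ∈ Finset.range b, L * (m % p ^ (t + 1)) / p ^ (t + 1) with hCL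
  have hcarryN : KR.SL p (N * m) b = N * KR.SL p m b + CN := by
    rw [KR.SL, hCN, KR.SL, Finset.mul_sum, ← Finset.sum_add_distrib]
    apply Finset.sum_congr rfl
    intro t _
    exact KR.carry_id N m (p ^ (t + 1))
  have hcarryL : KR.SL p (L * m) b = L * KR.SL p m b + CL := by
    rw [KR.SL, hCL, KR.SL, Finset.mul_sum, ← Finset.sum_add_distrib]
    apply Finset.sum_congr rfl
    intro t _
    exact KR.carry_id L m (p ^ (t + 1))
  -- per-level monotonicity
  have hmono : CL + KR.SL p N b ≤ CN + KR.SL p L b := by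
    rw [hCL, hCN, KR.SL, KR.SL, ← Finset.sum_add_distrib, ← Finset.sum_add_distrib]
    apply Finset.sum_le_sum
    intro t _
    apply KR.div_mono _ _ _ hLN
    -- 1 ≤ m % p ^ (t + 1)
    rcases Nat.eq_zero_or_pos (m % p ^ (t + 1)) with h0 | h0
    · exfalso
      apply hpm
      have : p ^ (t + 1) ∣ m := Nat.dvd_of_mod_eq_zero h0
      exact dvd_trans (dvd_pow_self p (Nat.succ_ne_zero t)) this
    · exact h0
  rw [hLeL, hLem, hLeLf, hcarryL] at hSL
  rw [hLeN, hLem, hLeNf, hcarryN]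
  omega

end Part2

section Part4
variable {p : ℕ} [hp : Fact p.Prime]

lemma KR.BQ_ne_zero (n m : ℕ) : BQ n m ≠ 0 := by
  unfold BQ
  apply div_ne_zero
  · exact_mod_cast Nat.factorial_ne_zero _
  · apply pow_ne_zero
    exact_mod_cast Nat.factorial_ne_zero _

lemma KR.val_BQ (n m : ℕ) : padicValRat p (BQ n m)
    = (padicValNat p ((n * m).factorial) : ℤ) - (n : ℤ) * padicValNat p (m.factorial) := by
  unfold BQ
  rw [padicValRat.div (by exact_mod_cast Nat.factorial_ne_zero _)
      (pow_ne_zero _ (by exact_mod_cast Nat.factorial_ne_zero _)),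
    padicValRat.pow]
  rw [padicValRat.of_nat, padicValRat.of_nat]

lemma KR.BQ_one (n : ℕ) : BQ n 1 = (n.factorial : ℚ) := by
  unfold BQ
  simp

lemma KR.cast3 {A B C D E : ℕ} (h : A * B + C + D + 1 ≤ E) :
    (C : ℤ) + ((D : ℤ) + 1) ≤ (E : ℤ) - (A : ℤ) * (B : ℤ) := by
  have h' : ((A * B + C + D + 1 : ℕ) : ℤ) ≤ ((E : ℕ) : ℤ) := by exact_mod_cast h
  push_cast at h'
  omega

lemma KR.cast2 {A B C E : ℕ} (h : A * B + C ≤ E) :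
    (C : ℤ) ≤ (E : ℤ) - (A : ℤ) * (B : ℤ) := by
  have h' : ((A * B + C : ℕ) : ℤ) ≤ ((E : ℕ) : ℤ) := by exact_mod_cast h
  push_cast at h'
  omega

lemma KR.sum_special {α : Type*} [DecidableEq α] {s : Finset α} {F G : α → ℤ} {t₀ : α} {E : ℤ}
    (ht : t₀ ∈ s) (h0 : G t₀ + E ≤ F t₀) (h : ∀ t ∈ s.erase t₀, G t ≤ F t) :
    (∑ t ∈ s, G t) + E ≤ ∑ t ∈ s, F t := by
  rw [← Finset.add_sum_erase _ F ht, ← Finset.add_sum_erase _ G ht]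
  have := Finset.sum_le_sum h
  omega

end Part4


/-- Lemma 4 (Krattenthaler–Rivoal): for a prime `p`, `0 ≤ a < p`, `j ≥ 0`, positive
integers `N_1, …, N_k`, `M_𝐍 = ∏_i N_i!` and `1 ≤ L ≤ max(N_1, …, N_k)`, one has
`B_𝐍(a+pj)·(H_{Lj+⌊La/p⌋} − H_{Lj}) ∈ p·(M_𝐍/Θ_L)·ℤ_p`. -/
theorem BQvec_mul_harm_diff_mem_p_M_theta_zp (p : ℕ) [hp : Fact p.Prime] (a j : ℕ)
    (ha : a < p) {k : ℕ} (N : Fin k → ℕ) (hN : ∀ i, 0 < N i)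
    (L : ℕ) (hL1 : 1 ≤ L) (hL2 : L ≤ Finset.univ.sup N) :
    ‖((BQvec N (a + p * j) * (harm (L * j + L * a / p) - harm (L * j)) : ℚ) : ℚ_[p])‖
      ≤ ‖(((p : ℚ) * (∏ i, ((N i).factorial : ℚ)) / (Theta L : ℚ) : ℚ) : ℚ_[p])‖ := by
  have hp1 : 1 < p := hp.out.one_lt
  have hp0 : 0 < p := hp.out.pos
  -- basic notation
  set Mq : ℚ := ∏ i, ((N i).factorial : ℚ) with hMq
  have hMq0 : Mq ≠ 0 := by
    rw [hMq]
    apply Finset.prod_ne_zero_iff.2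
    intro i _
    exact_mod_cast Nat.factorial_ne_zero _
  have hTh0 : ((Theta L : ℕ) : ℚ) ≠ 0 := by
    have := Rat.den_nz (harm L)
    rw [Theta]
    exact_mod_cast this
  set Y : ℚ := (p : ℚ) * Mq / (Theta L : ℚ) with hY
  have hY0 : Y ≠ 0 := by
    rw [hY]
    apply div_ne_zero _ hTh0
    apply mul_ne_zero _ hMq0
    exact_mod_cast hp0.ne'
  have hMval : padicValRat p Mq = ∑ i, (padicValNat p ((N i).factorial) : ℤ) := by
    rw [hMq, KR.val_prod _ _ (fun i _ => by exact_mod_cast Nat.factorial_ne_zero _)]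
    apply Finset.sum_congr rfl
    intro i _
    exact padicValRat.of_nat
  have hYval : padicValRat p Y = 1 + padicValRat p Mq - (padicValNat p (Theta L) : ℤ) := by
    rw [hY, padicValRat.div (mul_ne_zero (by exact_mod_cast hp0.ne') hMq0) hTh0,
      padicValRat.mul (by exact_mod_cast hp0.ne') hMq0, padicValRat.self hp1,
      padicValRat.of_nat]
  have hYle : padicValRat p Y ≤ 1 + padicValRat p Mq := by
    have : (0 : ℤ) ≤ (padicValNat p (Theta L) : ℤ) := by positivity
    omega
  -- reduce to padicNorm
  rw [Padic.eq_padicNorm, Padic.eq_padicNorm]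
  have hgoal : padicNorm p (BQvec N (a + p * j) * (harm (L * j + L * a / p) - harm (L * j)))
      ≤ padicNorm p Y := by
    by_cases hf0 : L * a / p = 0
    · rw [hf0, Nat.add_zero, sub_self, mul_zero]
      simp only [padicNorm.zero]
      exact padicNorm.nonneg Y
    -- now f' ≥ 1
    have hf1 : 1 ≤ L * a / p := Nat.one_le_iff_ne_zero.mpr hf0
    have ha1 : 1 ≤ a := by
      rcases Nat.eq_zero_or_pos a with h0 | h0
      · subst h0; simp at hf0
      · exact h0
    by_cases hcase : a = 1 ∧ j = 0
    · -- special case m = 1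
      obtain ⟨ha1', hj0⟩ := hcase
      subst ha1' hj0
      simp only [Nat.mul_zero, Nat.zero_add, Nat.mul_one, Nat.add_zero]
      have hBv : BQvec N 1 = Mq := by
        rw [BQvec, hMq]
        apply Finset.prod_congr rfl
        intro i _
        exact KR.BQ_one (N i)
      rw [hBv, show harm 0 = 0 by simp [harm], sub_zero]
      apply KR.padicNorm_le_padicNorm hY0
      intro hx
      have hh0 : harm (L / p) ≠ 0 := by
        intro h0
        rw [h0, mul_zero] at hx
        exact hx rfl
      rcases KR.theta_dichotomy (p := p) hL1 with hdi | hdi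
      · rw [padicValRat.mul hMq0 hh0, hYval]
        omega
      · exact absurd hdi hh0
    · -- main case
      have hm2 : 2 ≤ a + p * j := by
        rcases Nat.eq_zero_or_pos j with hj | hj
        · subst hj
          have : a ≠ 1 := fun h => hcase ⟨h, rfl⟩
          omega
        · have : p ≤ p * j := Nat.le_mul_of_pos_right p hj
          omega
      have hm0 : a + p * j ≠ 0 := by omega
      -- univ nonempty, pick the max component
      have hne : (Finset.univ : Finset (Fin k)).Nonempty := by
        by_contra hcon
        rw [Finset.not_nonempty_iff_eq_empty] at hcon
        rw [hcon, Finset.sup_empty] at hL2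
        simp at hL2
        omega
      obtain ⟨t₀, ht₀mem, ht₀⟩ := Finset.exists_mem_eq_sup Finset.univ hne N
      have hLN : L ≤ N t₀ := ht₀ ▸ hL2
      -- expand harmonic difference
      rw [KR.harm_add (L * j) (L * a / p), add_sub_cancel_left, Finset.mul_sum]
      apply padicNorm.sum_le' _ (padicNorm.nonneg Y)
      intro i hi
      have hif : i + 1 ≤ L * a / p := Finset.mem_range.1 hi
      apply KR.padicNorm_le_padicNorm hY0
      intro _
      -- valuation bound for the term
      have hcast : ((L * j : ℕ) : ℚ) + (i : ℚ) + 1 = ((L * j + i + 1 : ℕ) : ℚ) := by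
        push_cast
        ring
      have hc0 : ((L * j + i + 1 : ℕ) : ℚ) ≠ 0 := by
        have : 0 < L * j + i + 1 := by omega
        exact_mod_cast this.ne'
      have hBv0 : BQvec N (a + p * j) ≠ 0 := by
        rw [BQvec]
        exact Finset.prod_ne_zero_iff.2 fun t _ => KR.BQ_ne_zero _ _
      have hterm : padicValRat p (BQvec N (a + p * j) * (1 / ((L * j : ℕ) + (i : ℚ) + 1)))
          = padicValRat p (BQvec N (a + p * j))
            - (padicValNat p (L * j + i + 1) : ℤ) := by
        rw [hcast]
        rw [padicValRat.mul hBv0 (by rw [one_div]; exact inv_ne_zero hc0), one_div,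
          padicValRat.inv, padicValRat.of_nat]
        ring
      have hclaim := KR.claimS (p := p) (L := L) (N := N t₀) (a := a) (j := j) (i := i + 1)
        hLN ha1 ha hm2 (by omega) hif
      have hBQval : padicValRat p (BQvec N (a + p * j))
          = ∑ t, ((padicValNat p ((N t * (a + p * j)).factorial) : ℤ)
              - (N t : ℤ) * padicValNat p ((a + p * j).factorial)) := by
        rw [BQvec, KR.val_prod _ _ (fun t _ => KR.BQ_ne_zero _ _)]
        apply Finset.sum_congr rfl
        intro t _
        exact KR.val_BQ _ _
      have hsum : (∑ t, (padicValNat p ((N t).factorial) : ℤ))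
            + ((padicValNat p (L * j + i + 1) : ℤ) + 1)
          ≤ ∑ t, ((padicValNat p ((N t * (a + p * j)).factorial) : ℤ)
              - (N t : ℤ) * padicValNat p ((a + p * j).factorial)) := by
        apply KR.sum_special ht₀mem
        · show (padicValNat p ((N t₀).factorial) : ℤ)
              + ((padicValNat p (L * j + i + 1) : ℤ) + 1)
            ≤ (padicValNat p ((N t₀ * (a + p * j)).factorial) : ℤ)
              - (N t₀ : ℤ) * padicValNat p ((a + p * j).factorial)
          have hcc : L * j + (i + 1) = L * j + i + 1 := by omega
          rw [hcc] at hclaim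
          exact KR.cast3 hclaim
        · intro t _
          show (padicValNat p ((N t).factorial) : ℤ)
            ≤ (padicValNat p ((N t * (a + p * j)).factorial) : ℤ)
              - (N t : ℤ) * padicValNat p ((a + p * j).factorial)
          exact KR.cast2 (KR.UB (p := p) (N := N t) (m := a + p * j) hm0)
      rw [hterm, hBQval]
      calc padicValRat p Y ≤ 1 + padicValRat p Mq := hYle
        _ = 1 + ∑ t, (padicValNat p ((N t).factorial) : ℤ) := by rw [hMval]
        _ ≤ (∑ t, ((padicValNat p ((N t * (a + p * j)).factorial) : ℤ)
              - (N t : ℤ) * padicValNat p ((a + p * j).factorial)))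
            - (padicValNat p (L * j + i + 1) : ℤ) := by omega
  exact_mod_cast hgoal
end

section
/- Let N ≥ 1 be an integer with associated lists (α_i)_{i=1,…,μ} and (β_i)_{i=1,…,η}, and define Δ(x) := Σ_{i=1}^μ ⌊α_i x⌋ − Σ_{i=1}^η ⌊β_i x⌋ for real x. Then: (i) Δ(x+1) = Δ(x) for all real x, and Δ(n) = 0 for every integer n; (ii) for every integer n, Δ is weakly increasing on the interval [n, n+1); (iii) Δ(x) ≥ 0 for all real x; (iv) for every nonzero rational number r whose denominator in lowest terms belongs to {2, 3, …, N}, one has Δ(r) ≥ 1. -/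
open Finset

/-- The Landau function `Δ(x) = Σ_{i=1}^μ ⌊α_i x⌋ − Σ_{i=1}^η ⌊β_i x⌋` associated to `N`,
where the `α_i` (resp. `β_i`) are the quotients of `N` by products of evenly (resp. oddly)
many distinct prime factors of `N`, the `β` list being padded with `φ(N)` entries `1`. -/
noncomputable def Delta (N : ℕ) (x : ℝ) : ℤ :=
  (∑ J ∈ evenSub N, ⌊((N / ∏ p ∈ J, p : ℕ) : ℝ) * x⌋)
    - (∑ J ∈ oddSub N, ⌊((N / ∏ p ∈ J, p : ℕ) : ℝ) * x⌋)
    - (N.totient : ℤ) * ⌊x⌋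

lemma int_floor_div_nat (y : ℝ) (d : ℕ) (hd : 0 < d) : ⌊y / (d:ℝ)⌋ = ⌊y⌋ / (d:ℤ) := by
  have hd' : (0:ℝ) < d := by exact_mod_cast hd
  rw [Int.floor_eq_iff]
  constructor
  · rw [le_div_iff₀ hd']
    calc ((⌊y⌋ / (d:ℤ) : ℤ) : ℝ) * d = ((⌊y⌋ / (d:ℤ) * d : ℤ) : ℝ) := by push_cast; ring
      _ ≤ (⌊y⌋ : ℝ) := by exact_mod_cast Int.ediv_mul_le ⌊y⌋ (by exact_mod_cast hd.ne')
      _ ≤ y := Int.floor_le y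
  · rw [div_lt_iff₀ hd']
    have h1 : ⌊y⌋ + 1 ≤ (⌊y⌋ / (d:ℤ) + 1) * d :=
      Int.add_one_le_iff.mpr (Int.lt_ediv_add_one_mul_self ⌊y⌋ (by exact_mod_cast hd))
    calc y < (⌊y⌋ : ℝ) + 1 := Int.lt_floor_add_one y
      _ ≤ (((⌊y⌋ / (d:ℤ) + 1) * d : ℤ) : ℝ) := by exact_mod_cast h1
      _ = (((⌊y⌋ / (d:ℤ) : ℤ) : ℝ) + 1) * d := by push_cast; ring

lemma signed_split (N : ℕ) (f : Finset ℕ → ℤ) :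
    ∑ J ∈ N.primeFactors.powerset, (-1:ℤ)^J.card * f J
      = ∑ J ∈ evenSub N, f J - ∑ J ∈ oddSub N, f J := by
  rw [evenSub, oddSub,
    ← Finset.sum_filter_add_sum_filter_not N.primeFactors.powerset (fun J => Even J.card)
      (fun J => (-1:ℤ)^J.card * f J)]
  have h1 : ∀ J ∈ N.primeFactors.powerset.filter (fun J => Even J.card),
      (-1:ℤ)^J.card * f J = f J := by
    intro J hJ
    rw [(mem_filter.mp hJ).2.neg_one_pow, one_mul]
  have h2 : ∀ J ∈ N.primeFactors.powerset.filter (fun J => ¬ Even J.card),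
      (-1:ℤ)^J.card * f J = - f J := by
    intro J hJ
    rw [(Nat.not_even_iff_odd.mp (mem_filter.mp hJ).2).neg_one_pow, neg_one_mul]
  rw [Finset.sum_congr rfl h1, Finset.sum_congr rfl h2, Finset.sum_neg_distrib]
  congr 2
  apply Finset.sum_congr _ (fun _ _ => rfl)
  apply Finset.filter_congr
  intro J _
  simp [Nat.not_even_iff_odd]

lemma count_lemma (N : ℕ) (hN : 1 ≤ N) (M : ℕ) :
    ∑ J ∈ N.primeFactors.powerset, (-1:ℤ)^J.card * ((M / ∏ p ∈ J, p : ℕ) : ℤ)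
      = (((Finset.Ioc 0 M).filter (fun m => N.Coprime m)).card : ℤ) := by
  have hstep1 : ∀ J ∈ N.primeFactors.powerset,
      (-1:ℤ)^J.card * ((M / ∏ p ∈ J, p : ℕ) : ℤ)
        = ∑ m ∈ Finset.Ioc 0 M, (-1:ℤ)^J.card * (if (∏ p ∈ J, p) ∣ m then 1 else 0) := by
    intro J _
    rw [← Finset.mul_sum, Finset.sum_boole, ← Nat.Ioc_filter_dvd_card_eq_div]
  rw [Finset.sum_congr rfl hstep1, Finset.sum_comm]
  have hinner : ∀ m ∈ Finset.Ioc 0 M,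
      ∑ J ∈ N.primeFactors.powerset, (-1:ℤ)^J.card * (if (∏ p ∈ J, p) ∣ m then 1 else 0)
        = if N.Coprime m then 1 else 0 := by
    intro m hm
    have hm0 : 0 < m := (Finset.mem_Ioc.mp hm).1
    have hT : N.primeFactors.powerset.filter (fun J => (∏ p ∈ J, p) ∣ m)
        = (N.primeFactors.filter (fun p => p ∣ m)).powerset := by
      ext K
      simp only [mem_filter, mem_powerset]
      constructor
      · rintro ⟨hK, hKd⟩ p hp
        exact mem_filter.mpr ⟨hK hp, dvd_trans (Finset.dvd_prod_of_mem _ hp) hKd⟩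
      · intro h
        refine ⟨fun p hp => (mem_filter.mp (h hp)).1, ?_⟩
        exact Finset.prod_primes_dvd m
          (fun p hp => (Nat.prime_of_mem_primeFactors (mem_filter.mp (h hp)).1).prime)
          (fun p hp => (mem_filter.mp (h hp)).2)
    have : ∑ J ∈ N.primeFactors.powerset, (-1:ℤ)^J.card * (if (∏ p ∈ J, p) ∣ m then 1 else 0)
        = ∑ J ∈ N.primeFactors.powerset.filter (fun J => (∏ p ∈ J, p) ∣ m), (-1:ℤ)^J.card := by
      rw [Finset.sum_filter]
      exact Finset.sum_congr rfl fun J _ => by rw [mul_ite, mul_one, mul_zero]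
    rw [this, hT, Finset.sum_powerset_neg_one_pow_card]
    congr 1
    rw [eq_iff_iff, Finset.filter_eq_empty_iff]
    constructor
    · intro h
      by_contra hc
      obtain ⟨p, hp, hpN, hpm⟩ := Nat.Prime.not_coprime_iff_dvd.mp hc
      exact h (Nat.mem_primeFactors.mpr ⟨hp, hpN, by omega⟩) hpm
    · intro h p hp hpm
      have hpN := Nat.prime_of_mem_primeFactors hp
      exact Nat.Prime.not_coprime_iff_dvd.mpr
        ⟨p, hpN, Nat.dvd_of_mem_primeFactors hp, hpm⟩ h
  rw [Finset.sum_congr rfl hinner, Finset.sum_boole]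

lemma totient_eq_card_Ioc (N : ℕ) (hN : 1 ≤ N) :
    (N.totient : ℤ) = (((Finset.Ioc 0 N).filter (fun m => N.Coprime m)).card : ℤ) := by
  rcases eq_or_lt_of_le hN with h1 | h2
  · subst h1; decide
  · congr 1
    rw [Nat.totient]
    congr 1
    ext m
    simp only [mem_filter, mem_range, mem_Ioc]
    constructor
    · rintro ⟨hm, hc⟩
      have hm0 : m ≠ 0 := by
        rintro rfl
        rw [Nat.coprime_zero_right] at hc
        omega
      exact ⟨⟨by omega, by omega⟩, hc⟩
    · rintro ⟨⟨hm0, hmN⟩, hc⟩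
      have : m ≠ N := by
        rintro rfl
        rw [Nat.coprime_self] at hc
        omega
      exact ⟨by omega, hc⟩

lemma Delta_master (N : ℕ) (hN : 1 ≤ N) (x : ℝ) :
    Delta N x = (((Finset.Ioc 0 (⌊(N:ℝ) * x⌋ - N * ⌊x⌋).toNat).filter
      (fun m => N.Coprime m)).card : ℤ) := by
  set M : ℤ := ⌊(N:ℝ) * x⌋ - N * ⌊x⌋ with hM
  have hM0 : 0 ≤ M := by
    have h1 : ((N:ℤ) * ⌊x⌋ : ℤ) ≤ ⌊(N:ℝ) * x⌋ := by
      rw [Int.le_floor]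
      push_cast
      exact mul_le_mul_of_nonneg_left (Int.floor_le x) (by positivity)
    omega
  have key : ∀ J ∈ N.primeFactors.powerset,
      ⌊((N / ∏ p ∈ J, p : ℕ) : ℝ) * x⌋
        = ((M.toNat / ∏ p ∈ J, p : ℕ) : ℤ) + ((N / ∏ p ∈ J, p : ℕ) : ℤ) * ⌊x⌋ := by
    intro J hJ
    set d : ℕ := ∏ p ∈ J, p with hd
    have hJsub := Finset.mem_powerset.mp hJ
    have hd0 : 0 < d := Finset.prod_pos fun p hp =>
      (Nat.prime_of_mem_primeFactors (hJsub hp)).pos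
    have hdN : d ∣ N := Finset.prod_primes_dvd N
      (fun p hp => (Nat.prime_of_mem_primeFactors (hJsub hp)).prime)
      (fun p hp => Nat.dvd_of_mem_primeFactors (hJsub hp))
    have hcast : ((N / d : ℕ) : ℝ) = (N : ℝ) / (d : ℝ) :=
      Nat.cast_div hdN (by exact_mod_cast hd0.ne')
    have h1 : ⌊((N / d : ℕ) : ℝ) * x⌋ = ⌊(N:ℝ) * x⌋ / (d : ℤ) := by
      rw [hcast, div_mul_eq_mul_div, int_floor_div_nat _ _ hd0]
    have h2 : ⌊(N:ℝ) * x⌋ = M + ((N / d : ℕ) : ℤ) * ⌊x⌋ * (d : ℤ) := by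
      have : ((N / d : ℕ) : ℤ) * (d : ℤ) = (N : ℤ) := by
        exact_mod_cast congrArg (Nat.cast : ℕ → ℤ) (Nat.div_mul_cancel hdN)
      rw [hM]
      linear_combination (-⌊x⌋) * this
    have h3 : (M + ((N / d : ℕ) : ℤ) * ⌊x⌋ * (d : ℤ)) / (d : ℤ)
        = M / (d : ℤ) + ((N / d : ℕ) : ℤ) * ⌊x⌋ :=
      Int.add_mul_ediv_right _ _ (by exact_mod_cast hd0.ne')
    have h4 : M / (d : ℤ) = ((M.toNat / d : ℕ) : ℤ) := by
      rw [Int.natCast_ediv, Int.toNat_of_nonneg hM0]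
    rw [h1, ← h2] at *
    rw [h2, h3, h4]
  have expand : Delta N x
      = ∑ J ∈ N.primeFactors.powerset, (-1:ℤ)^J.card * ⌊((N / ∏ p ∈ J, p : ℕ) : ℝ) * x⌋
        - (N.totient : ℤ) * ⌊x⌋ := by
    rw [Delta, signed_split]
  rw [expand, Finset.sum_congr rfl (fun J hJ => by rw [key J hJ])]
  have distrib : ∑ J ∈ N.primeFactors.powerset,
      (-1:ℤ)^J.card * (((M.toNat / ∏ p ∈ J, p : ℕ) : ℤ) + ((N / ∏ p ∈ J, p : ℕ) : ℤ) * ⌊x⌋)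
      = (∑ J ∈ N.primeFactors.powerset, (-1:ℤ)^J.card * ((M.toNat / ∏ p ∈ J, p : ℕ) : ℤ))
        + (∑ J ∈ N.primeFactors.powerset, (-1:ℤ)^J.card * ((N / ∏ p ∈ J, p : ℕ) : ℤ)) * ⌊x⌋ := by
    rw [Finset.sum_mul, ← Finset.sum_add_distrib]
    exact Finset.sum_congr rfl fun J _ => by ring
  rw [distrib, count_lemma N hN, count_lemma N hN, ← totient_eq_card_Ioc N hN]
  ring

/-- Lemma (Krattenthaler–Rivoal): properties of the Landau step function `Δ`:
(i) `Δ` is `1`-periodic and vanishes at integers; (ii) `Δ` is weakly increasing on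
each interval `[n, n+1)` with `n ∈ ℤ`; (iii) `Δ(x) ≥ 0` everywhere; (iv) `Δ(r) ≥ 1`
for every nonzero rational `r` whose reduced denominator lies in `{2, …, N}`. -/
theorem Delta_properties (N : ℕ) (hN : 1 ≤ N) :
    (∀ x : ℝ, Delta N (x + 1) = Delta N x) ∧
    (∀ n : ℤ, Delta N (n : ℝ) = 0) ∧
    (∀ n : ℤ, MonotoneOn (Delta N) (Set.Ico (n : ℝ) ((n : ℝ) + 1))) ∧
    (∀ x : ℝ, 0 ≤ Delta N x) ∧
    (∀ r : ℚ, r ≠ 0 → 2 ≤ r.den → r.den ≤ N → 1 ≤ Delta N (r : ℝ)) := by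
  refine ⟨?_, ?_, ?_, ?_, ?_⟩
  · -- periodicity
    intro x
    rw [Delta_master N hN, Delta_master N hN]
    have h1 : (N:ℝ) * (x + 1) = (N:ℝ) * x + (N:ℕ) := by ring
    have harg : ⌊(N:ℝ) * (x + 1)⌋ - (N:ℤ) * ⌊x + 1⌋ = ⌊(N:ℝ) * x⌋ - N * ⌊x⌋ := by
      rw [h1, Int.floor_add_natCast, Int.floor_add_one]
      ring
    rw [harg]
  · -- vanishing at integers
    intro n
    rw [Delta_master N hN]
    have h1 : (N:ℝ) * (n:ℝ) = (((N:ℤ) * n : ℤ) : ℝ) := by push_cast; ring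
    rw [h1, Int.floor_intCast, Int.floor_intCast]
    simp
  · -- monotone on [n, n+1)
    intro n
    intro x hx y hy hxy
    rw [Delta_master N hN, Delta_master N hN]
    have hfx : ⌊x⌋ = n := Int.floor_eq_iff.mpr ⟨hx.1, hx.2⟩
    have hfy : ⌊y⌋ = n := Int.floor_eq_iff.mpr ⟨hy.1, hy.2⟩
    have hfloor : ⌊(N:ℝ) * x⌋ ≤ ⌊(N:ℝ) * y⌋ :=
      Int.floor_le_floor (mul_le_mul_of_nonneg_left hxy (by positivity))
    have hMN : (⌊(N:ℝ) * x⌋ - N * ⌊x⌋).toNat ≤ (⌊(N:ℝ) * y⌋ - N * ⌊y⌋).toNat := by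
      rw [hfx, hfy]
      omega
    have hsub : (Finset.Ioc 0 (⌊(N:ℝ) * x⌋ - N * ⌊x⌋).toNat).filter (fun m => N.Coprime m)
        ⊆ (Finset.Ioc 0 (⌊(N:ℝ) * y⌋ - N * ⌊y⌋).toNat).filter (fun m => N.Coprime m) :=
      Finset.filter_subset_filter _ (Finset.Ioc_subset_Ioc_right hMN)
    exact_mod_cast Finset.card_le_card hsub
  · -- nonnegativity
    intro x
    rw [Delta_master N hN]
    positivity
  · -- value ≥ 1 at rationals with denominator in [2, N]
    intro r _ h2 h3
    rw [Delta_master N hN]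
    have hd0 : (0:ℚ) < (r.den:ℚ) := by exact_mod_cast (by omega : 0 < r.den)
    have hle : (r.den:ℤ) * ⌊r⌋ ≤ r.num := by
      have : (((r.den:ℤ) * ⌊r⌋ : ℤ) : ℚ) ≤ (r.num : ℚ) := by
        calc (((r.den:ℤ) * ⌊r⌋ : ℤ) : ℚ) = (⌊r⌋ : ℚ) * (r.den:ℚ) := by push_cast; ring
          _ ≤ r * (r.den:ℚ) := by gcongr; exact Int.floor_le r
          _ = (r.num : ℚ) := Rat.mul_den_eq_num r
      exact_mod_cast this
    have hne : (r.den:ℤ) * ⌊r⌋ ≠ r.num := by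
      intro h
      have hdvd : (r.den:ℤ) ∣ r.num := ⟨⌊r⌋, h.symm⟩
      have hdvd' : r.den ∣ r.num.natAbs := Int.ofNat_dvd_left.mp hdvd
      have hg := Nat.dvd_gcd hdvd' (dvd_refl r.den)
      have h1 : r.num.natAbs.gcd r.den = 1 := r.reduced
      rw [h1] at hg
      have := Nat.dvd_one.mp hg
      omega
    have hnum : (r.den:ℤ) * ⌊r⌋ + 1 ≤ r.num := by
      rcases lt_or_eq_of_le hle with h | h
      · omega
      · exact absurd h hne
    have hfrac : (⌊r⌋:ℚ) + 1/(r.den:ℚ) ≤ r := by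
      have h1 : (((r.den:ℤ) * ⌊r⌋ + 1 : ℤ) : ℚ) ≤ (r.num : ℚ) := by exact_mod_cast hnum
      rw [← Rat.mul_den_eq_num] at h1
      calc (⌊r⌋:ℚ) + 1/(r.den:ℚ) = (((r.den:ℤ) * ⌊r⌋ + 1 : ℤ) : ℚ) / (r.den:ℚ) := by
            field_simp; push_cast; ring
        _ ≤ (r * (r.den:ℚ)) / (r.den:ℚ) := by gcongr
        _ = r := by field_simp
    have hfracR : (⌊(r:ℝ)⌋:ℝ) + 1/(r.den:ℝ) ≤ (r:ℝ) := by
      have := (Rat.cast_le (K := ℝ)).mpr hfrac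
      push_cast at this
      rwa [Rat.floor_cast]
    have hNden : (1:ℝ) ≤ (N:ℝ) / (r.den:ℝ) := by
      rw [le_div_iff₀ (by exact_mod_cast (by omega : 0 < r.den))]
      exact_mod_cast by omega
    have hkey : ((N:ℤ) * ⌊(r:ℝ)⌋ + 1 : ℤ) ≤ ⌊(N:ℝ) * (r:ℝ)⌋ := by
      rw [Int.le_floor]
      push_cast
      have hN0 : (0:ℝ) < (N:ℝ) := by exact_mod_cast hN
      calc (N:ℝ) * (⌊(r:ℝ)⌋:ℝ) + 1 ≤ (N:ℝ) * (⌊(r:ℝ)⌋:ℝ) + (N:ℝ) / (r.den:ℝ) := by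
            linarith
        _ = (N:ℝ) * ((⌊(r:ℝ)⌋:ℝ) + 1/(r.den:ℝ)) := by field_simp
        _ ≤ (N:ℝ) * (r:ℝ) := by
            apply mul_le_mul_of_nonneg_left hfracR hN0.le
    have hM1 : 1 ≤ (⌊(N:ℝ) * (r:ℝ)⌋ - N * ⌊(r:ℝ)⌋).toNat := by omega
    have hmem : 1 ∈ (Finset.Ioc 0 (⌊(N:ℝ) * (r:ℝ)⌋ - N * ⌊(r:ℝ)⌋).toNat).filter
        (fun m => N.Coprime m) := by
      rw [Finset.mem_filter, Finset.mem_Ioc]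
      exact ⟨⟨one_pos, hM1⟩, Nat.coprime_one_right N⟩
    have := Finset.card_pos.mpr ⟨1, hmem⟩
    omega
end

section
/- For any prime p, any positive integers N_1, …, N_k, and any non-negative integers m, r, w with 0 ≤ w < p^r, the p-adic valuation of 𝐁_𝐍(w + m·p^r) is at least the p-adic valuation of 𝐁_𝐍(m), i.e., 𝐁_𝐍(w + m p^r)/𝐁_𝐍(m) ∈ ℤ_p. -/
open Finset

def cnt (S : Finset ℕ) (t : ℕ) : ℕ :=
  ((Finset.Ioc 0 t).filter fun a => ∀ p ∈ S, ¬ p ∣ a).card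

lemma cnt_mono (S : Finset ℕ) {t t' : ℕ} (h : t ≤ t') : cnt S t ≤ cnt S t' := by
  apply Finset.card_le_card
  exact Finset.filter_subset_filter _ (Finset.Ioc_subset_Ioc_right h)

lemma cnt_split {q : ℕ} (hq : q.Prime) (S : Finset ℕ) (hS : ∀ p ∈ S, p.Prime)
    (hqS : q ∉ S) (t : ℕ) :
    cnt S t = cnt (insert q S) t + cnt S (t / q) := by
  classical
  unfold cnt
  rw [← Finset.card_filter_add_card_filter_not (s := (Finset.Ioc 0 t).filter
    fun a => ∀ p ∈ S, ¬ p ∣ a) (p := fun a => q ∣ a), add_comm]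
  congr 1
  · rw [Finset.filter_filter]
    congr 1
    apply Finset.filter_congr
    intro a _
    simp only [Finset.forall_mem_insert]
    tauto
  · rw [Finset.filter_filter]
    apply Finset.card_nbij' (fun a => a / q) (fun b => q * b)
    · intro a ha
      simp only [Finset.mem_coe, Finset.mem_filter, Finset.mem_Ioc] at ha ⊢
      obtain ⟨⟨ha0, hat⟩, hP, hqa⟩ := ha
      refine ⟨⟨Nat.div_pos (Nat.le_of_dvd ha0 hqa) hq.pos, Nat.div_le_div_right hat⟩, ?_⟩
      intro pp hp hdvd
      exact hP pp hp (hdvd.trans (Nat.div_dvd_of_dvd hqa))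
    · intro b hb
      simp only [Finset.mem_coe, Finset.mem_filter, Finset.mem_Ioc] at hb ⊢
      obtain ⟨⟨hb0, hbt⟩, hP⟩ := hb
      refine ⟨⟨Nat.mul_pos hq.pos hb0, ?_⟩, ?_, ?_⟩
      · rw [mul_comm]; exact (Nat.le_div_iff_mul_le hq.pos).mp hbt
      · intro pp hp hdvd
        have hne : pp ≠ q := fun h => hqS (h ▸ hp)
        have := ((hS pp hp).coprime_iff_not_dvd).2
          (fun hd => hne ((Nat.prime_dvd_prime_iff_eq (hS pp hp) hq).mp hd))
        exact hP pp hp ((Nat.Coprime.dvd_of_dvd_mul_left this hdvd))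
      · exact Dvd.intro b rfl
    · intro a ha
      simp only [Finset.mem_coe, Finset.mem_filter, Finset.mem_Ioc] at ha
      exact Nat.mul_div_cancel' ha.2.2
    · intro b hb
      exact Nat.mul_div_cancel_left b hq.pos

lemma cnt_ie (S : Finset ℕ) (hS : ∀ p ∈ S, p.Prime) (t : ℕ) :
    ∑ J ∈ S.powerset, (-1 : ℤ) ^ J.card * ((t / ∏ p ∈ J, p : ℕ) : ℤ) = cnt S t := by
  classical
  induction S using Finset.induction_on generalizing t with
  | empty =>
    simp [cnt]
  | @insert q S hqS ih =>
    have hq : q.Prime := hS q (Finset.mem_insert_self q S)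
    have hS' : ∀ p ∈ S, p.Prime := fun p hp => hS p (Finset.mem_insert_of_mem hp)
    rw [Finset.powerset_insert, Finset.sum_union, Finset.sum_image]
    · have h2 : ∑ J ∈ S.powerset, (-1:ℤ)^(insert q J).card * ((t / ∏ p ∈ insert q J, p : ℕ) : ℤ)
          = -∑ J ∈ S.powerset, (-1:ℤ)^J.card * ((t / q / ∏ p ∈ J, p : ℕ) : ℤ) := by
        rw [← Finset.sum_neg_distrib]
        apply Finset.sum_congr rfl
        intro J hJ
        have hqJ : q ∉ J := fun h => hqS (Finset.mem_powerset.mp hJ h)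
        rw [Finset.card_insert_of_notMem hqJ, Finset.prod_insert hqJ, pow_succ,
          Nat.div_div_eq_div_mul, mul_comm (q : ℕ)]
        ring_nf
      rw [h2, ih hS' t, ih hS' (t / q), cnt_split hq S hS' hqS t]
      push_cast
      ring
    · intro J hJ J' hJ' h
      have hqJ : q ∉ J := fun hh => hqS (Finset.mem_powerset.mp hJ hh)
      have hqJ' : q ∉ J' := fun hh => hqS (Finset.mem_powerset.mp hJ' hh)
      rw [← Finset.erase_insert hqJ, ← Finset.erase_insert hqJ', h]
    · rw [Finset.disjoint_right]
      intro J hJ hJ2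
      obtain ⟨K, hK, rfl⟩ := Finset.mem_image.mp hJ
      exact hqS (Finset.mem_powerset.mp hJ2 (Finset.mem_insert_self q K))

lemma coprime_iff_forall {N : ℕ} (hN : 0 < N) (a : ℕ) :
    N.Coprime a ↔ ∀ p ∈ N.primeFactors, ¬ p ∣ a := by
  constructor
  · intro h p hp hpa
    have hp' := Nat.prime_of_mem_primeFactors hp
    have hpN : p ∣ N := Nat.dvd_of_mem_primeFactors hp
    have : p ∣ Nat.gcd N a := Nat.dvd_gcd hpN hpa
    rw [h] at this
    exact hp'.one_lt.ne' (Nat.dvd_one.mp this)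
  · intro h
    by_contra hc
    obtain ⟨p, hp, hpN, hpa⟩ := Nat.Prime.not_coprime_iff_dvd.mp hc
    exact h p (Nat.mem_primeFactors.mpr ⟨hp, hpN, hN.ne'⟩) hpa

lemma cnt_totient {N : ℕ} (hN : 0 < N) : cnt N.primeFactors N = N.totient := by
  rw [← Nat.filter_coprime_Ico_eq_totient N 1]
  unfold cnt
  have : Finset.Ioc 0 N = Finset.Ico 1 (1 + N) := by
    ext x; simp [Nat.lt_succ_iff, Nat.succ_le_iff, Nat.add_comm]
  rw [this]
  congr 1
  apply Finset.filter_congr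
  intro a _
  exact (coprime_iff_forall hN a).symm


lemma per_term {N : ℕ} (hN : 0 < N) (M : ℕ) :
    (∑ J ∈ evenSub N, ((M / ∏ q ∈ J, q : ℕ) : ℤ))
      - (∑ J ∈ oddSub N, ((M / ∏ q ∈ J, q : ℕ) : ℤ))
      - (N.totient : ℤ) * ((M / N : ℕ) : ℤ)
      = (cnt N.primeFactors (M % N) : ℤ) := by
  classical
  have hsplit : (∑ J ∈ N.primeFactors.powerset, (-1:ℤ)^J.card * ((M / ∏ q ∈ J, q : ℕ) : ℤ))
      = (∑ J ∈ evenSub N, ((M / ∏ q ∈ J, q : ℕ) : ℤ))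
        - ∑ J ∈ oddSub N, ((M / ∏ q ∈ J, q : ℕ) : ℤ) := by
    rw [← Finset.sum_filter_add_sum_filter_not N.primeFactors.powerset
      (fun J => Even J.card)]
    unfold evenSub oddSub
    congr 1
    · apply Finset.sum_congr rfl
      intro J hJ
      rw [(Finset.mem_filter.mp hJ).2.neg_one_pow, one_mul]
    · rw [← Finset.sum_neg_distrib]
      apply Finset.sum_congr
      · congr 1
        ext J
        simp [Nat.not_even_iff_odd]
      · intro J hJ
        rw [Finset.mem_filter] at hJ
        rw [hJ.2.neg_one_pow]
        ring
  have hdecomp : ∀ J ∈ N.primeFactors.powerset,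
      M / ∏ q ∈ J, q = (M % N) / ∏ q ∈ J, q + (N / ∏ q ∈ J, q) * (M / N) := by
    intro J hJ
    have hdvd : (∏ q ∈ J, q) ∣ N :=
      dvd_trans (Finset.prod_dvd_prod_of_subset _ _ _ (Finset.mem_powerset.mp hJ))
        (Nat.prod_primeFactors_dvd N)
    have hpos : 0 < ∏ q ∈ J, q := Nat.pos_of_dvd_of_pos hdvd hN
    conv_lhs => rw [← Nat.mod_add_div M N]
    rw [show N * (M / N) = (∏ q ∈ J, q) * ((N / ∏ q ∈ J, q) * (M / N)) by
      rw [← mul_assoc, Nat.mul_div_cancel' hdvd]]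
    rw [Nat.add_mul_div_left _ _ hpos]
  have hprimes : ∀ q ∈ N.primeFactors, q.Prime := fun q hq => Nat.prime_of_mem_primeFactors hq
  have hie1 := cnt_ie N.primeFactors hprimes (M % N)
  have hie2 := cnt_ie N.primeFactors hprimes N
  rw [cnt_totient hN] at hie2
  have key : (∑ J ∈ N.primeFactors.powerset, (-1:ℤ)^J.card * ((M / ∏ q ∈ J, q : ℕ) : ℤ))
      = (cnt N.primeFactors (M % N) : ℤ) + (N.totient : ℤ) * ((M / N : ℕ) : ℤ) := by
    calc (∑ J ∈ N.primeFactors.powerset, (-1:ℤ)^J.card * ((M / ∏ q ∈ J, q : ℕ) : ℤ))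
        = ∑ J ∈ N.primeFactors.powerset,
            ((-1:ℤ)^J.card * (((M % N) / ∏ q ∈ J, q : ℕ) : ℤ)
              + ((-1:ℤ)^J.card * ((N / ∏ q ∈ J, q : ℕ) : ℤ)) * ((M / N : ℕ) : ℤ)) := by
          apply Finset.sum_congr rfl
          intro J hJ
          rw [hdecomp J hJ]
          push_cast
          ring
      _ = (cnt N.primeFactors (M % N) : ℤ) + (N.totient : ℤ) * ((M / N : ℕ) : ℤ) := by
          rw [Finset.sum_add_distrib, hie1, ← Finset.sum_mul, hie2, mul_comm]
  rw [← hsplit, key]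
  ring

lemma padicValNat_finset_prod {α : Type*} (p : ℕ) [hp : Fact p.Prime] (s : Finset α)
    (f : α → ℕ) (hf : ∀ a ∈ s, f a ≠ 0) :
    padicValNat p (∏ a ∈ s, f a) = ∑ a ∈ s, padicValNat p (f a) := by
  classical
  induction s using Finset.induction_on with
  | empty => simp
  | @insert a s ha ih =>
    rw [Finset.prod_insert ha, Finset.sum_insert ha,
      padicValNat.mul (hf a (Finset.mem_insert_self a s))
        (Finset.prod_ne_zero_iff.mpr fun b hb => hf b (Finset.mem_insert_of_mem hb)),
      ih fun b hb => hf b (Finset.mem_insert_of_mem hb)]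

lemma valBB (p : ℕ) [hp : Fact p.Prime] {N : ℕ} (hN : 0 < N) (n b : ℕ)
    (hb : Nat.log p (N * n) < b) :
    padicValRat p (BB N n)
      = ∑ i ∈ Finset.Ico 1 b, (cnt N.primeFactors ((N * n / p ^ i) % N) : ℤ) := by
  classical
  have hfact : ∀ J : Finset ℕ, J ∈ N.primeFactors.powerset →
      padicValNat p (Nat.factorial ((N / ∏ q ∈ J, q) * n)) =
        ∑ i ∈ Finset.Ico 1 b, (N * n / p ^ i) / (∏ q ∈ J, q) := by
    intro J hJ
    have hdvd : (∏ q ∈ J, q) ∣ N :=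
      dvd_trans (Finset.prod_dvd_prod_of_subset _ _ _ (Finset.mem_powerset.mp hJ))
        (Nat.prod_primeFactors_dvd N)
    have hle : (N / ∏ q ∈ J, q) * n ≤ N * n :=
      Nat.mul_le_mul_right _ (Nat.div_le_self _ _)
    rw [padicValNat_factorial (lt_of_le_of_lt (Nat.log_mono_right hle) hb)]
    apply Finset.sum_congr rfl
    intro i _
    have h1 : (N / ∏ q ∈ J, q) * n = N * n / ∏ q ∈ J, q := by
      rw [mul_comm, ← Nat.mul_div_assoc n hdvd, mul_comm n N]
    rw [h1, Nat.div_div_eq_div_mul, Nat.div_div_eq_div_mul, mul_comm (∏ q ∈ J, q) (p ^ i)]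
  have hnum0 : Bnum N n ≠ 0 :=
    Finset.prod_ne_zero_iff.mpr fun J _ => Nat.factorial_ne_zero _
  have hoddprod0 : (∏ J ∈ oddSub N, Nat.factorial ((N / ∏ q ∈ J, q) * n)) ≠ 0 :=
    Finset.prod_ne_zero_iff.mpr fun J _ => Nat.factorial_ne_zero _
  have hden0 : Bden N n ≠ 0 :=
    mul_ne_zero hoddprod0 (pow_ne_zero _ (Nat.factorial_ne_zero _))
  have hvnum : (padicValNat p (Bnum N n) : ℤ)
      = ∑ i ∈ Finset.Ico 1 b, ∑ J ∈ evenSub N, (((N * n / p ^ i) / ∏ q ∈ J, q : ℕ) : ℤ) := by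
    rw [Bnum, padicValNat_finset_prod p _ _ (fun J _ => Nat.factorial_ne_zero _),
      Nat.cast_sum, ← Finset.sum_comm]
    apply Finset.sum_congr rfl
    intro J hJ
    rw [hfact J (Finset.mem_filter.mp hJ).1, Nat.cast_sum]
  have hvden : (padicValNat p (Bden N n) : ℤ)
      = (∑ i ∈ Finset.Ico 1 b, ∑ J ∈ oddSub N, (((N * n / p ^ i) / ∏ q ∈ J, q : ℕ) : ℤ))
        + (N.totient : ℤ) * ∑ i ∈ Finset.Ico 1 b, ((n / p ^ i : ℕ) : ℤ) := by
    rw [Bden, padicValNat.mul hoddprod0 (pow_ne_zero _ (Nat.factorial_ne_zero _)),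
      padicValNat.pow _ _,
      padicValNat_finset_prod p _ _ (fun J _ => Nat.factorial_ne_zero _),
      padicValNat_factorial (lt_of_le_of_lt (Nat.log_mono_right (Nat.le_mul_of_pos_left n hN)) hb)]
    rw [Nat.cast_add, Nat.cast_sum, Nat.cast_mul, Nat.cast_sum]
    congr 1
    rw [← Finset.sum_comm]
    apply Finset.sum_congr rfl
    intro J hJ
    rw [hfact J (Finset.mem_filter.mp hJ).1, Nat.cast_sum]
  have hvBB : padicValRat p (BB N n)
      = (padicValNat p (Bnum N n) : ℤ) - (padicValNat p (Bden N n) : ℤ) := by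
    rw [BB, padicValRat.div (by exact_mod_cast hnum0) (by exact_mod_cast hden0),
      padicValRat.of_nat, padicValRat.of_nat]
  rw [hvBB, hvnum, hvden]
  rw [Finset.mul_sum, sub_add_eq_sub_sub, ← Finset.sum_sub_distrib, ← Finset.sum_sub_distrib]
  apply Finset.sum_congr rfl
  intro i _
  have hMN : (N * n / p ^ i) / N = n / p ^ i := by
    rw [Nat.div_div_eq_div_mul, mul_comm (p ^ i) N, ← Nat.div_div_eq_div_mul,
      Nat.mul_div_cancel_left n hN]
  have := per_term hN (N * n / p ^ i)
  rw [hMN] at this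
  linarith [this]

lemma BB_step (p : ℕ) [hp : Fact p.Prime] {N : ℕ} (hN : 0 < N)
    (m r w : ℕ) (hw : w < p ^ r) :
    padicValRat p (BB N m) ≤ padicValRat p (BB N (w + m * p ^ r)) := by
  classical
  set n := w + m * p ^ r with hn
  have hppos : 0 < p := hp.out.pos
  have hprpos : 0 < p ^ r := Nat.pow_pos hppos
  have hmn : m ≤ n := le_trans (Nat.le_mul_of_pos_right m hprpos) (Nat.le_add_left _ _)
  set b := Nat.log p (N * n) + 1 with hb
  have hbn : Nat.log p (N * n) < r + b := by omega
  have hbm : Nat.log p (N * m) < b := by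
    have : Nat.log p (N * m) ≤ Nat.log p (N * n) := Nat.log_mono_right (Nat.mul_le_mul_left N hmn)
    omega
  rw [valBB p hN n (r + b) hbn, valBB p hN m b hbm]
  -- split the n-sum
  have hsplit : Finset.Ico 1 (r + b) = Finset.Ico 1 (r + 1) ∪ Finset.Ico (r + 1) (r + b) := by
    rw [Finset.Ico_union_Ico_eq_Ico] <;> omega
  rw [hsplit, Finset.sum_union (by
    apply Finset.Ico_disjoint_Ico_consecutive)]
  have hmain : ∑ i ∈ Finset.Ico 1 b, (cnt N.primeFactors ((N * m / p ^ i) % N) : ℤ)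
      ≤ ∑ i ∈ Finset.Ico (r + 1) (r + b), (cnt N.primeFactors ((N * n / p ^ i) % N) : ℤ) := by
    rw [Finset.sum_Ico_eq_sum_range, Finset.sum_Ico_eq_sum_range]
    have : r + b - (r + 1) = b - 1 := by omega
    rw [this]
    apply Finset.sum_le_sum
    intro j _
    set i := 1 + j with hi
    -- compare M = N*m/p^i and M' = N*n/p^(r+i)
    have hq : (N * n / p ^ (r + i)) / N = (N * m / p ^ i) / N := by
      have h1 : ∀ t : ℕ, (N * t / p ^ i) / N = t / p ^ i := by
        intro t
        rw [Nat.div_div_eq_div_mul, mul_comm (p ^ i) N, ← Nat.div_div_eq_div_mul,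
          Nat.mul_div_cancel_left t hN]
      have h2 : (N * n / p ^ (r + i)) / N = n / p ^ (r + i) := by
        rw [Nat.div_div_eq_div_mul, mul_comm (p ^ (r + i)) N, ← Nat.div_div_eq_div_mul,
          Nat.mul_div_cancel_left n hN]
      rw [h1, h2]
      have : n / p ^ r = m := by
        rw [hn, Nat.add_mul_div_right w m hprpos, Nat.div_eq_of_lt hw, zero_add]
      rw [pow_add, ← Nat.div_div_eq_div_mul, this]
    have hle : N * m / p ^ i ≤ N * n / p ^ (r + i) := by
      have hpow : p ^ (r + i) = p ^ r * p ^ i := pow_add p r i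
      have h3 : N * m / p ^ i = N * m * p ^ r / p ^ (r + i) := by
        rw [hpow, ← Nat.div_div_eq_div_mul, Nat.mul_div_cancel _ hprpos]
      rw [h3]
      apply Nat.div_le_div_right
      calc N * m * p ^ r = N * (m * p ^ r) := by ring
        _ ≤ N * n := Nat.mul_le_mul_left N (Nat.le_add_left _ _)
    have hmod : (N * m / p ^ i) % N ≤ (N * n / p ^ (r + i)) % N := by
      have e1 := Nat.div_add_mod (N * m / p ^ i) N
      have e2 := Nat.div_add_mod (N * n / p ^ (r + i)) N
      rw [hq] at e2
      omega
    have : r + 1 + j = r + i := by omega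
    rw [this]
    exact_mod_cast cnt_mono N.primeFactors hmod
  have hpos : (0 : ℤ) ≤ ∑ i ∈ Finset.Ico 1 (r + 1),
      (cnt N.primeFactors ((N * n / p ^ i) % N) : ℤ) :=
    Finset.sum_nonneg fun i _ => Int.natCast_nonneg _
  linarith

lemma padicValRat_finset_prod {α : Type*} (p : ℕ) [hp : Fact p.Prime] (s : Finset α)
    (f : α → ℚ) (hf : ∀ a ∈ s, f a ≠ 0) :
    padicValRat p (∏ a ∈ s, f a) = ∑ a ∈ s, padicValRat p (f a) := by
  classical
  induction s using Finset.induction_on with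
  | empty => simp
  | @insert a s ha ih =>
    rw [Finset.prod_insert ha, Finset.sum_insert ha,
      padicValRat.mul (hf a (Finset.mem_insert_self a s))
        (Finset.prod_ne_zero_iff.mpr fun b hb => hf b (Finset.mem_insert_of_mem hb)),
      ih fun b hb => hf b (Finset.mem_insert_of_mem hb)]

lemma BB_pos (N m : ℕ) : (0 : ℚ) < BB N m := by
  have h1 : (0 : ℚ) < (Bnum N m : ℚ) := by
    exact_mod_cast Nat.pos_of_ne_zero (Finset.prod_ne_zero_iff.mpr fun J _ =>
      Nat.factorial_ne_zero _)
  have h2 : (0 : ℚ) < (Bden N m : ℚ) := by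
    exact_mod_cast Nat.pos_of_ne_zero (mul_ne_zero
      (Finset.prod_ne_zero_iff.mpr fun J _ => Nat.factorial_ne_zero _)
      (pow_ne_zero _ (Nat.factorial_ne_zero _)))
  exact div_pos h1 h2


/-- Lemma (Krattenthaler–Rivoal): for a prime `p`, positive integers `N_1, …, N_k`, and
`0 ≤ w < p^r`, one has `v_p(𝐁_𝐍(w + mp^r)) ≥ v_p(𝐁_𝐍(m))`, i.e.
`𝐁_𝐍(w + mp^r)/𝐁_𝐍(m) ∈ ℤ_p`. -/
theorem BBvec_div_BBvec_mem_zp (p : ℕ) [hp : Fact p.Prime]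
    {k : ℕ} (N : Fin k → ℕ) (hN : ∀ i, 0 < N i)
    (m r w : ℕ) (hw : w < p ^ r) :
    ‖((BBvec N (w + m * p ^ r) / BBvec N m : ℚ) : ℚ_[p])‖ ≤ 1 := by
  set n := w + m * p ^ r with hn
  have hvpos : ∀ t : ℕ, (0 : ℚ) < BBvec N t := fun t =>
    Finset.prod_pos fun i _ => BB_pos (N i) t
  have hne1 : BBvec N n ≠ 0 := (hvpos n).ne'
  have hne2 : BBvec N m ≠ 0 := (hvpos m).ne'
  have hne : BBvec N n / BBvec N m ≠ 0 := div_ne_zero hne1 hne2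
  have hval : 0 ≤ padicValRat p (BBvec N n / BBvec N m) := by
    rw [padicValRat.div hne1 hne2, BBvec, BBvec,
      padicValRat_finset_prod p _ _ (fun i _ => (BB_pos (N i) n).ne'),
      padicValRat_finset_prod p _ _ (fun i _ => (BB_pos (N i) m).ne'),
      ← Finset.sum_sub_distrib]
    apply Finset.sum_nonneg
    intro i _
    rw [sub_nonneg]
    exact BB_step p (hN i) m r w hw
  rw [Padic.eq_padicNorm]
  have hnorm : padicNorm p (BBvec N n / BBvec N m) ≤ 1 := by
    rw [padicNorm.eq_zpow_of_nonzero hne]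
    apply zpow_le_one_of_nonpos₀
    · exact_mod_cast hp.out.one_lt.le
    · omega
  exact_mod_cast hnorm
end

section
/- For every integer N ≥ 1 and every integer m ≥ 0, the rational number 𝐁_N(m) = (∏_{j=1}^μ (α_j m)!)/(∏_{j=1}^η (β_j m)!) is an integer; that is, ∏_{j=1}^η (β_j m)! divides ∏_{j=1}^μ (α_j m)!. -/
open Finset

lemma prodJ_pos {N : ℕ} {J : Finset ℕ} (hJ : J ⊆ N.primeFactors) : 0 < ∏ p ∈ J, p :=
  Finset.prod_pos fun p hp => (Nat.prime_of_mem_primeFactors (hJ hp)).pos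

lemma prodJ_dvd {N : ℕ} {J : Finset ℕ} (hJ : J ⊆ N.primeFactors) : (∏ p ∈ J, p) ∣ N :=
  (Finset.prod_dvd_prod_of_subset _ _ _ hJ).trans N.prod_primeFactors_dvd

lemma filter_dvd_eq_empty_iff {N a : ℕ} (hN : 1 ≤ N) :
    (N.primeFactors.filter (· ∣ a)) = ∅ ↔ N.Coprime a := by
  rw [Finset.filter_eq_empty_iff]
  constructor
  · intro h
    by_contra hc
    obtain ⟨q, hq, hqd⟩ := Nat.exists_prime_and_dvd hc
    exact h (Nat.mem_primeFactors.mpr ⟨hq, hqd.trans (Nat.gcd_dvd_left _ _), by omega⟩)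
      (hqd.trans (Nat.gcd_dvd_right _ _))
  · intro h p hp hpa
    have hpp := Nat.prime_of_mem_primeFactors hp
    have hd : p ∣ Nat.gcd N a := Nat.dvd_gcd (Nat.dvd_of_mem_primeFactors hp) hpa
    rw [h] at hd
    exact hpp.one_lt.ne' (Nat.eq_one_of_dvd_one hd)

lemma powerset_filter_dvd (N a : ℕ) :
    N.primeFactors.powerset.filter (fun J => (∏ p ∈ J, p) ∣ a)
      = (N.primeFactors.filter (· ∣ a)).powerset := by
  ext J
  simp only [Finset.mem_filter, Finset.mem_powerset]
  constructor
  · rintro ⟨hJP, hdvd⟩ p hp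
    exact Finset.mem_filter.mpr ⟨hJP hp, (Finset.dvd_prod_of_mem _ hp).trans hdvd⟩
  · intro h
    have hJP : J ⊆ N.primeFactors := fun p hp => (Finset.mem_filter.mp (h hp)).1
    refine ⟨hJP, Finset.prod_primes_dvd a ?_ ?_⟩
    · exact fun p hp => (Nat.prime_of_mem_primeFactors (hJP hp)).prime
    · exact fun p hp => (Finset.mem_filter.mp (h hp)).2

/-- Inclusion–exclusion: the alternating sum of `⌊x/∏J⌋` counts the integers in
`(0, x]` coprime to `N`. -/
lemma key_identity (N x : ℕ) (hN : 1 ≤ N) :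
    (∑ J ∈ evenSub N, x / ∏ p ∈ J, p)
      = #{a ∈ Finset.Ioc 0 x | N.Coprime a} + ∑ J ∈ oddSub N, x / ∏ p ∈ J, p := by
  have hZ : (∑ J ∈ evenSub N, ((x / ∏ p ∈ J, p : ℕ) : ℤ))
      - ∑ J ∈ oddSub N, ((x / ∏ p ∈ J, p : ℕ) : ℤ)
      = (#{a ∈ Finset.Ioc 0 x | N.Coprime a} : ℤ) := by
    have hoddfilter : (N.primeFactors.powerset.filter fun J => ¬ Even J.card) = oddSub N := by
      ext J
      simp only [oddSub, Finset.mem_filter, Nat.not_even_iff_odd]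
    have he : ∑ J ∈ evenSub N, (-1 : ℤ) ^ J.card * ((x / ∏ p ∈ J, p : ℕ) : ℤ)
        = ∑ J ∈ evenSub N, ((x / ∏ p ∈ J, p : ℕ) : ℤ) :=
      Finset.sum_congr rfl fun J hJ => by
        rw [Even.neg_one_pow (Finset.mem_filter.mp hJ).2, one_mul]
    have ho : ∑ J ∈ oddSub N, (-1 : ℤ) ^ J.card * ((x / ∏ p ∈ J, p : ℕ) : ℤ)
        = -∑ J ∈ oddSub N, ((x / ∏ p ∈ J, p : ℕ) : ℤ) := by
      rw [← Finset.sum_neg_distrib]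
      exact Finset.sum_congr rfl fun J hJ => by
        rw [Odd.neg_one_pow (Finset.mem_filter.mp hJ).2, neg_one_mul]
    have hsplit :
        (∑ J ∈ evenSub N, ((x / ∏ p ∈ J, p : ℕ) : ℤ))
          - ∑ J ∈ oddSub N, ((x / ∏ p ∈ J, p : ℕ) : ℤ)
        = ∑ J ∈ N.primeFactors.powerset, (-1 : ℤ) ^ J.card * ((x / ∏ p ∈ J, p : ℕ) : ℤ) := by
      rw [← Finset.sum_filter_add_sum_filter_not N.primeFactors.powerset
        (fun J => Even J.card) (fun J => (-1 : ℤ) ^ J.card * ((x / ∏ p ∈ J, p : ℕ) : ℤ))]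
      rw [hoddfilter]
      rw [show (N.primeFactors.powerset.filter fun J => Even J.card) = evenSub N from rfl]
      rw [he, ho]
      ring
    rw [hsplit]
    have hcard : ∀ J ∈ N.primeFactors.powerset,
        (-1 : ℤ) ^ J.card * ((x / ∏ p ∈ J, p : ℕ) : ℤ)
          = ∑ a ∈ Finset.Ioc 0 x,
              (if (∏ p ∈ J, p) ∣ a then (-1 : ℤ) ^ J.card else 0) := by
      intro J hJ
      rw [← Nat.Ioc_filter_dvd_card_eq_div x (∏ p ∈ J, p), Finset.card_filter]
      push_cast
      rw [Finset.mul_sum]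
      exact Finset.sum_congr rfl fun a _ => by split <;> simp
    rw [Finset.sum_congr rfl hcard, Finset.sum_comm]
    have hinner : ∀ a ∈ Finset.Ioc 0 x,
        (∑ J ∈ N.primeFactors.powerset,
          if (∏ p ∈ J, p) ∣ a then (-1 : ℤ) ^ J.card else 0)
        = (if N.Coprime a then 1 else 0) := by
      intro a _
      rw [← Finset.sum_filter, powerset_filter_dvd N a,
        Finset.sum_powerset_neg_one_pow_card]
      simp [filter_dvd_eq_empty_iff hN]
    rw [Finset.sum_congr rfl hinner, Finset.sum_boole]
  rw [← Nat.cast_sum, ← Nat.cast_sum] at hZ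
  omega

lemma coprime_count_blocks (N : ℕ) (hN : 1 ≤ N) (k : ℕ) :
    #{a ∈ Finset.Ioc 0 (N * k) | N.Coprime a} = k * N.totient := by
  induction k with
  | zero => simp
  | succ k ih =>
    have hsplit : Finset.Ioc 0 (N * (k + 1))
        = Finset.Ioc 0 (N * k) ∪ Finset.Ioc (N * k) (N * (k + 1)) := by
      rw [Finset.Ioc_union_Ioc_eq_Ioc (Nat.zero_le _)
        (Nat.mul_le_mul_left N (Nat.le_succ k))]
    have hblock : #{a ∈ Finset.Ioc (N * k) (N * (k + 1)) | N.Coprime a} = N.totient := by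
      have : Finset.Ioc (N * k) (N * (k + 1))
          = Finset.Ico (N * k + 1) ((N * k + 1) + N) := by
        ext a
        simp only [Finset.mem_Ioc, Finset.mem_Ico]
        constructor <;> intro h <;> constructor <;> nlinarith [h.1, h.2]
      rw [this, Nat.filter_coprime_Ico_eq_totient N (N * k + 1)]
    rw [hsplit, Finset.filter_union,
      Finset.card_union_of_disjoint (Finset.disjoint_filter_filter (by
        rw [Finset.disjoint_left]
        intro a ha hb
        rw [Finset.mem_Ioc] at ha hb
        omega)),
      ih, hblock]
    ring

lemma coprime_count_ge (N x : ℕ) (hN : 1 ≤ N) :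
    N.totient * (x / N) ≤ #{a ∈ Finset.Ioc 0 x | N.Coprime a} := by
  rw [mul_comm, ← coprime_count_blocks N hN (x / N)]
  refine Finset.card_le_card (Finset.filter_subset_filter _
    (Finset.Ioc_subset_Ioc le_rfl ?_))
  rw [mul_comm]
  exact Nat.div_mul_le_self x N

lemma key_ineq (N x : ℕ) (hN : 1 ≤ N) :
    (∑ J ∈ oddSub N, x / ∏ p ∈ J, p) + N.totient * (x / N)
      ≤ ∑ J ∈ evenSub N, x / ∏ p ∈ J, p := by
  rw [key_identity N x hN]
  have := coprime_count_ge N x hN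
  omega

lemma quotient_div {N m d q : ℕ} (hN : 0 < N) (hd : d ∣ N) (hdpos : 0 < d) (hq : 0 < q) :
    (N / d * m) / q = (N * m / q) / d := by
  obtain ⟨c, rfl⟩ := hd
  rw [Nat.mul_div_cancel_left c hdpos, Nat.div_div_eq_div_mul, mul_comm q d,
    ← Nat.div_div_eq_div_mul, mul_assoc, Nat.mul_div_cancel_left (c * m) hdpos]

/-- For every `N ≥ 1` and `m ≥ 0`, the rational number
`𝐁_N(m) = (∏_{j=1}^μ (α_j m)!)/(∏_{j=1}^η (β_j m)!)` is an integer: the product of the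
`(β_j m)!` (including the `φ(N)` padded entries `β_j = 1`) divides the product of the
`(α_j m)!`. -/
theorem Bden_dvd_Bnum (N m : ℕ) (hN : 1 ≤ N) : Bden N m ∣ Bnum N m := by
  have hNpos : 0 < N := hN
  have hprodne : (∏ J ∈ oddSub N, Nat.factorial ((N / ∏ p ∈ J, p) * m)) ≠ 0 :=
    Finset.prod_ne_zero_iff.mpr fun J _ => (Nat.factorial_pos _).ne'
  have hBnum : Bnum N m ≠ 0 :=
    Finset.prod_ne_zero_iff.mpr fun J _ => (Nat.factorial_pos _).ne'
  have hBden : Bden N m ≠ 0 :=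
    mul_ne_zero hprodne (pow_ne_zero _ (Nat.factorial_pos m).ne')
  rw [← Nat.factorization_le_iff_dvd hBden hBnum, Finsupp.le_def]
  intro p
  by_cases hp : p.Prime
  swap
  · simp [Nat.factorization_eq_zero_of_not_prime _ hp]
  haveI : Fact p.Prime := ⟨hp⟩
  set b := N * m + 1 with hb
  -- valuation of a factorial (αm)! for α = N/∏J
  have hval : ∀ J ∈ N.primeFactors.powerset,
      (Nat.factorial ((N / ∏ p ∈ J, p) * m)).factorization p
        = ∑ i ∈ Finset.Ico 1 b, ((N / ∏ p ∈ J, p) * m) / p ^ i := by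
    intro J hJ
    rw [Nat.factorization_def _ hp]
    refine padicValNat_factorial ?_
    calc Nat.log p ((N / ∏ p ∈ J, p) * m) ≤ (N / ∏ p ∈ J, p) * m := Nat.log_le_self _ _
      _ ≤ N * m := Nat.mul_le_mul_right m (Nat.div_le_self N _)
      _ < b := Nat.lt_succ_self _
  have hvalm : (Nat.factorial m).factorization p = ∑ i ∈ Finset.Ico 1 b, m / p ^ i := by
    rw [Nat.factorization_def _ hp]
    refine padicValNat_factorial ?_
    calc Nat.log p m ≤ m := Nat.log_le_self _ _
      _ ≤ N * m := Nat.le_mul_of_pos_left m hNpos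
      _ < b := Nat.lt_succ_self _
  have hnum : (Bnum N m).factorization p
      = ∑ J ∈ evenSub N, ∑ i ∈ Finset.Ico 1 b, ((N / ∏ p ∈ J, p) * m) / p ^ i := by
    rw [Bnum, Nat.factorization_prod (fun J _ => (Nat.factorial_pos _).ne'),
      Finset.sum_apply']
    exact Finset.sum_congr rfl fun J hJ => hval J (Finset.mem_filter.mp hJ).1
  have hden : (Bden N m).factorization p
      = (∑ J ∈ oddSub N, ∑ i ∈ Finset.Ico 1 b, ((N / ∏ p ∈ J, p) * m) / p ^ i)
        + N.totient * ∑ i ∈ Finset.Ico 1 b, m / p ^ i := by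
    rw [Bden, Nat.factorization_mul hprodne (pow_ne_zero _ (Nat.factorial_pos m).ne'),
      Finsupp.add_apply, Nat.factorization_pow, Finsupp.smul_apply, smul_eq_mul, hvalm,
      Nat.factorization_prod (fun J _ => (Nat.factorial_pos _).ne'), Finset.sum_apply']
    congr 1
    exact Finset.sum_congr rfl fun J hJ => hval J (Finset.mem_filter.mp hJ).1
  have hce : ∑ J ∈ evenSub N, ∑ i ∈ Finset.Ico 1 b, ((N / ∏ p ∈ J, p) * m) / p ^ i
      = ∑ i ∈ Finset.Ico 1 b, ∑ J ∈ evenSub N, ((N / ∏ p ∈ J, p) * m) / p ^ i :=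
    Finset.sum_comm
  have hco : ∑ J ∈ oddSub N, ∑ i ∈ Finset.Ico 1 b, ((N / ∏ p ∈ J, p) * m) / p ^ i
      = ∑ i ∈ Finset.Ico 1 b, ∑ J ∈ oddSub N, ((N / ∏ p ∈ J, p) * m) / p ^ i :=
    Finset.sum_comm
  rw [hnum, hden, hce, hco, Finset.mul_sum, ← Finset.sum_add_distrib]
  refine Finset.sum_le_sum fun i _ => ?_
  -- per exponent i, rewrite everything in terms of x = N*m/p^i and apply key_ineq
  set x := N * m / p ^ i with hx
  have hq : 0 < p ^ i := pow_pos hp.pos i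
  have hrw : ∀ J ∈ N.primeFactors.powerset,
      ((N / ∏ p ∈ J, p) * m) / p ^ i = x / ∏ p ∈ J, p := by
    intro J hJ
    have hJsub : J ⊆ N.primeFactors := Finset.mem_powerset.mp hJ
    exact quotient_div hNpos (prodJ_dvd hJsub) (prodJ_pos hJsub) hq
  have hmx : m / p ^ i = x / N := by
    rw [hx, Nat.div_div_eq_div_mul, mul_comm (p ^ i) N, mul_comm N m,
      ← Nat.div_div_eq_div_mul, Nat.mul_div_cancel m hNpos]
  rw [Finset.sum_congr (rfl : evenSub N = evenSub N)
      (fun J hJ => hrw J (Finset.mem_filter.mp hJ).1),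
    Finset.sum_congr (rfl : oddSub N = oddSub N)
      (fun J hJ => hrw J (Finset.mem_filter.mp hJ).1), hmx]
  exact key_ineq N x hN
end

section
/- Let m be a non-negative integer and N ≥ 1 an integer with associated lists (α_j)_{j=1,…,μ} and (β_j)_{j=1,…,η}, and let r_1, …, r_{φ(N)} be the elements of {1, 2, …, N} coprime to N, where φ is Euler's totient function. Then 𝐇_N(m) = Σ_{j=1}^{φ(N)} H(r_j/N, m) − φ(N)·H(1, m), where H(x, m) := Σ_{n=0}^{m−1} 1/(x+n). -/
open Finset

/-- `𝐇_N(m) = Σ_{j=1}^μ α_j H_{α_j m} − Σ_{j=1}^η β_j H_{β_j m}` (the `φ(N)` padded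
entries of the `β` list, equal to `1`, contribute `−φ(N)·H_m`). -/
noncomputable def HHbold (N m : ℕ) : ℚ :=
  (∑ J ∈ evenSub N, ((N / ∏ p ∈ J, p : ℕ) : ℚ) * harm ((N / ∏ p ∈ J, p) * m))
    - (∑ J ∈ oddSub N, ((N / ∏ p ∈ J, p : ℕ) : ℚ) * harm ((N / ∏ p ∈ J, p) * m))
    - (N.totient : ℚ) * harm m

/-- `H(x, m) = Σ_{n=0}^{m−1} 1/(x+n)`. -/
def Hshift (x : ℚ) (m : ℕ) : ℚ := ∑ n ∈ Finset.range m, 1 / (x + n)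

lemma Hshift_one (m : ℕ) : Hshift 1 m = harm m := by
  unfold Hshift harm
  exact Finset.sum_congr rfl fun n _ => by rw [add_comm]

lemma harm_mul (a m : ℕ) :
    harm (a * m) = ∑ n ∈ Finset.range m, ∑ i ∈ Finset.range a, (1 : ℚ) / (n * a + i + 1) := by
  induction m with
  | zero => simp [harm]
  | succ m ih =>
    rw [Finset.sum_range_succ, ← ih, mul_add, mul_one, harm, Finset.sum_range_add, ← harm]
    congr 1
    refine Finset.sum_congr rfl fun i _ => ?_
    push_cast
    ring_nf

lemma sum_Hshift_div (a m : ℕ) (ha : 0 < a) :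
    ∑ s ∈ Finset.Icc 1 a, Hshift ((s : ℚ) / a) m = (a : ℚ) * harm (a * m) := by
  have ha' : (a : ℚ) ≠ 0 := Nat.cast_ne_zero.mpr ha.ne'
  rw [harm_mul, Finset.mul_sum]
  unfold Hshift
  rw [Finset.sum_comm]
  refine Finset.sum_congr rfl fun n _ => ?_
  rw [Finset.mul_sum]
  refine Finset.sum_nbij' (fun s => s - 1) (fun i => i + 1) ?_ ?_ ?_ ?_ ?_
  · intro s hs
    simp only [Finset.mem_Icc] at hs
    simp only [Finset.mem_range]
    omega
  · intro i hi
    simp only [Finset.mem_range] at hi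
    simp only [Finset.mem_Icc]
    omega
  · intro s hs
    simp only [Finset.mem_Icc] at hs
    show s - 1 + 1 = s
    omega
  · intro i _
    show i + 1 - 1 = i
    omega
  · intro s hs
    simp only [Finset.mem_Icc] at hs
    obtain ⟨i, rfl⟩ : ∃ i, s = i + 1 := ⟨s - 1, by omega⟩
    show (1 : ℚ) / (((i + 1 : ℕ) : ℚ) / a + n) = a * (1 / (n * a + ((i + 1 - 1 : ℕ) : ℚ) + 1))
    have h1 : ((i + 1 : ℕ) : ℚ) / a + n = ((n : ℚ) * a + i + 1) / a := by
      field_simp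
      push_cast
      ring
    rw [h1, one_div_div, Nat.add_sub_cancel, mul_one_div]

lemma sum_Hshift_filter_dvd (N d m : ℕ) (hN : 0 < N) (hd : d ∣ N) (hd0 : 0 < d) :
    ∑ r ∈ (Finset.Icc 1 N).filter (fun r => d ∣ r), Hshift ((r : ℚ) / N) m
      = ((N / d : ℕ) : ℚ) * harm ((N / d) * m) := by
  have hNd : 0 < N / d := Nat.div_pos (Nat.le_of_dvd hN hd) hd0
  rw [← sum_Hshift_div (N / d) m hNd]
  have hd' : (d : ℚ) ≠ 0 := Nat.cast_ne_zero.mpr hd0.ne'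
  have hN' : (N : ℚ) ≠ 0 := Nat.cast_ne_zero.mpr hN.ne'
  have hNdQ : ((N / d : ℕ) : ℚ) = (N : ℚ) / d := by
    rw [Nat.cast_div hd hd']
  refine Finset.sum_nbij' (fun r => r / d) (fun s => d * s) ?_ ?_ ?_ ?_ ?_
  · intro r hr
    simp only [Finset.mem_filter, Finset.mem_Icc] at hr
    obtain ⟨⟨h1, h2⟩, k, rfl⟩ := hr
    simp only [Finset.mem_Icc]
    show 1 ≤ d * k / d ∧ d * k / d ≤ N / d
    rw [Nat.mul_div_cancel_left _ hd0]
    constructor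
    · rcases Nat.eq_zero_or_pos k with h | h
      · subst h; simp at h1
      · exact h
    · exact Nat.le_div_iff_mul_le hd0 |>.mpr (mul_comm d k ▸ h2)
  · intro s hs
    simp only [Finset.mem_Icc] at hs
    simp only [Finset.mem_filter, Finset.mem_Icc]
    refine ⟨⟨Nat.mul_pos hd0 hs.1, ?_⟩, Dvd.intro _ rfl⟩
    calc d * s ≤ d * (N / d) := Nat.mul_le_mul_left d hs.2
    _ = N := Nat.mul_div_cancel' hd
  · intro r hr
    simp only [Finset.mem_filter, Finset.mem_Icc] at hr
    show d * (r / d) = r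
    exact Nat.mul_div_cancel' hr.2
  · intro s _
    show d * s / d = s
    exact Nat.mul_div_cancel_left _ hd0
  · intro r hr
    simp only [Finset.mem_filter, Finset.mem_Icc] at hr
    obtain ⟨⟨h1, h2⟩, k, rfl⟩ := hr
    show Hshift (((d * k : ℕ) : ℚ) / N) m = Hshift (((d * k / d : ℕ) : ℚ) / ((N / d : ℕ) : ℚ)) m
    rw [Nat.mul_div_cancel_left _ hd0]
    congr 1
    rw [hNdQ]
    push_cast
    rw [div_div_eq_mul_div, mul_comm]
  
lemma neg_one_pow_powerset_sum (S : Finset ℕ) :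
    ∑ J ∈ S.powerset, (-1 : ℚ) ^ J.card = if S = ∅ then 1 else 0 := by
  have h := Finset.sum_powerset_neg_one_pow_card (x := S)
  have : ((∑ J ∈ S.powerset, (-1 : ℤ) ^ J.card : ℤ) : ℚ)
      = ∑ J ∈ S.powerset, (-1 : ℚ) ^ J.card := by push_cast; rfl
  rw [← this, h]
  split <;> simp

lemma incl_excl (N : ℕ) (hN : 0 < N) (g : ℕ → ℚ) :
    ∑ r ∈ (Finset.Icc 1 N).filter (fun r => Nat.Coprime r N), g r
      = ∑ J ∈ N.primeFactors.powerset, (-1 : ℚ) ^ J.card *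
          ∑ r ∈ (Finset.Icc 1 N).filter (fun r => (∏ p ∈ J, p) ∣ r), g r := by
  have key : ∀ J ∈ N.primeFactors.powerset, (-1 : ℚ) ^ J.card *
      ∑ r ∈ (Finset.Icc 1 N).filter (fun r => (∏ p ∈ J, p) ∣ r), g r
      = ∑ r ∈ Finset.Icc 1 N, (-1 : ℚ) ^ J.card * if (∏ p ∈ J, p) ∣ r then g r else 0 := by
    intro J _
    rw [Finset.sum_filter, Finset.mul_sum]
  rw [Finset.sum_congr rfl key, Finset.sum_comm]
  rw [Finset.sum_filter]
  refine Finset.sum_congr rfl fun r hr => ?_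
  simp only [Finset.mem_Icc] at hr
  have hsplit : ∀ J ∈ N.primeFactors.powerset,
      ((-1 : ℚ) ^ J.card * if (∏ p ∈ J, p) ∣ r then g r else 0)
      = (if (∏ p ∈ J, p) ∣ r then (-1 : ℚ) ^ J.card * g r else 0) := by
    intro J _
    split <;> simp
  rw [Finset.sum_congr rfl hsplit, ← Finset.sum_filter]
  have hset : (N.primeFactors.powerset.filter (fun J => (∏ p ∈ J, p) ∣ r))
      = (N.primeFactors.filter (fun p => p ∣ r)).powerset := by
    ext J
    simp only [Finset.mem_filter, Finset.mem_powerset, Finset.subset_iff, Finset.mem_filter]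
    constructor
    · rintro ⟨hJP, hdvd⟩
      exact fun p hp => ⟨hJP hp, (Finset.dvd_prod_of_mem _ hp).trans hdvd⟩
    · intro h
      refine ⟨fun p hp => (h hp).1, ?_⟩
      refine Finset.prod_primes_dvd r (fun p hp => ?_) (fun p hp => (h hp).2)
      exact (Nat.prime_of_mem_primeFactors (h hp).1).prime
  rw [hset, ← Finset.sum_mul, neg_one_pow_powerset_sum]
  have hco : (N.primeFactors.filter (fun p => p ∣ r)) = ∅ ↔ Nat.Coprime r N := by
    rw [Finset.filter_eq_empty_iff]
    constructor
    · intro h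
      by_contra hc
      obtain ⟨p, hp, hpr, hpN⟩ := Nat.Prime.not_coprime_iff_dvd.mp hc
      exact h (Nat.mem_primeFactors.mpr ⟨hp, hpN, hN.ne'⟩) hpr
    · intro hc p hpmem hpr
      have hp := Nat.prime_of_mem_primeFactors hpmem
      have hpN := Nat.dvd_of_mem_primeFactors hpmem
      exact Nat.Prime.not_coprime_iff_dvd.mpr ⟨p, hp, hpr, hpN⟩ hc
  split_ifs with h1 h2 h2
  · rw [one_mul]
  · exact absurd (hco.mpr h1) h2
  · exact absurd (hco.mp h2) h1
  · rw [zero_mul]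

/-- Lemma (Krattenthaler–Rivoal): for `m ≥ 0` and `N ≥ 1`,
`𝐇_N(m) = Σ_{j=1}^{φ(N)} H(r_j/N, m) − φ(N)·H(1, m)`, where `r_1, …, r_{φ(N)}` are the
elements of `{1, …, N}` coprime to `N`. -/
theorem HHbold_eq_sum_Hshift (N m : ℕ) (hN : 1 ≤ N) :
    HHbold N m =
      (∑ r ∈ (Finset.Icc 1 N).filter fun r => Nat.Coprime r N, Hshift ((r : ℚ) / N) m)
        - (N.totient : ℚ) * Hshift 1 m := by
  have hN0 : 0 < N := hN
  rw [Hshift_one]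
  rw [incl_excl N hN0 (fun r => Hshift ((r : ℚ) / N) m)]
  have hterm : ∀ J ∈ N.primeFactors.powerset,
      (-1 : ℚ) ^ J.card *
        ∑ r ∈ (Finset.Icc 1 N).filter (fun r => (∏ p ∈ J, p) ∣ r), Hshift ((r : ℚ) / N) m
      = (-1 : ℚ) ^ J.card *
          (((N / ∏ p ∈ J, p : ℕ) : ℚ) * harm ((N / ∏ p ∈ J, p) * m)) := by
    intro J hJ
    rw [Finset.mem_powerset] at hJ
    have hdvd : (∏ p ∈ J, p) ∣ N :=
      (Finset.prod_dvd_prod_of_subset _ _ _ hJ).trans (Nat.prod_primeFactors_dvd N)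
    have hpos : 0 < ∏ p ∈ J, p :=
      Finset.prod_pos fun p hp => (Nat.prime_of_mem_primeFactors (hJ hp)).pos
    rw [sum_Hshift_filter_dvd N _ m hN0 hdvd hpos]
  rw [Finset.sum_congr rfl hterm]
  have hsplit := Finset.sum_filter_add_sum_filter_not N.primeFactors.powerset
    (fun J => Even J.card)
    (fun J => (-1 : ℚ) ^ J.card *
      (((N / ∏ p ∈ J, p : ℕ) : ℚ) * harm ((N / ∏ p ∈ J, p) * m)))
  rw [← hsplit]
  unfold HHbold evenSub oddSub
  have heven : ∀ J ∈ N.primeFactors.powerset.filter (fun J => Even J.card),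
      (-1 : ℚ) ^ J.card *
        (((N / ∏ p ∈ J, p : ℕ) : ℚ) * harm ((N / ∏ p ∈ J, p) * m))
      = ((N / ∏ p ∈ J, p : ℕ) : ℚ) * harm ((N / ∏ p ∈ J, p) * m) := by
    intro J hJ
    rw [Finset.mem_filter] at hJ
    rw [hJ.2.neg_one_pow, one_mul]
  have hodd : ∀ J ∈ N.primeFactors.powerset.filter (fun J => ¬ Even J.card),
      (-1 : ℚ) ^ J.card *
        (((N / ∏ p ∈ J, p : ℕ) : ℚ) * harm ((N / ∏ p ∈ J, p) * m))
      = -(((N / ∏ p ∈ J, p : ℕ) : ℚ) * harm ((N / ∏ p ∈ J, p) * m)) := by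
    intro J hJ
    rw [Finset.mem_filter] at hJ
    rw [(Nat.not_even_iff_odd.mp hJ.2).neg_one_pow, neg_one_mul]
  rw [Finset.sum_congr rfl heven, Finset.sum_congr rfl hodd, Finset.sum_neg_distrib]
  have hfe : N.primeFactors.powerset.filter (fun J => ¬ Even J.card)
      = N.primeFactors.powerset.filter (fun J => Odd J.card) := by
    apply Finset.filter_congr
    intro J _
    exact Nat.not_even_iff_odd
  rw [hfe]
  ring
end
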